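/- arXiv:0908.3105 — 2 statements merged into one kernel-verified Lean document; each statement's English description precedes it below -/
import Mathlib

section
/- Let H be a Hopf algebra with bijective antipode, and let X and Y be left–left Yetter–Drinfeld H-module algebras that are braided symmetric, i.e., (y_{(-1)}▷x)⊗y_{(0)} = x_{(0)}⊗(S^{-1}(x_{(-1)})▷y) for all x ∈ X, y ∈ Y, and suppose each of X and Y is braided commutative. Then their braided product X⋈Y is braided commutative: ((x⋈y)_{(-1)}▷(v⋈u))(x⋈y)_{(0)} = (x⋈y)(v⋈u) for all x,v ∈ X and y,u ∈ Y. -/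
open TensorProduct LinearMap

noncomputable section

section AbstractLayer

universe u v w

variable (K : Type u) [Field K]

/-- Data of an "algebra–coalgebra object" (e.g. a bialgebra such as a Drinfeld double),
recorded as plain linear-map data. -/
structure GData (A : Type v) [AddCommGroup A] [Module K A] where
  mul : A →ₗ[K] A →ₗ[K] A
  one : A
  comul : A →ₗ[K] A ⊗[K] A
  counit : A →ₗ[K] K

/-- Data of an algebra `X` together with an action and a coaction of `A`:
the raw data underlying a (left–left) Yetter–Drinfeld module algebra. -/
structure XData (A : Type v) (X : Type w) [AddCommGroup A] [Module K A]
    [AddCommGroup X] [Module K X] where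
  mul : X →ₗ[K] X →ₗ[K] X
  one : X
  act : A →ₗ[K] X →ₗ[K] X
  coact : X →ₗ[K] A ⊗[K] X

variable {K}
variable {A : Type v} [AddCommGroup A] [Module K A]
variable {X : Type w} [AddCommGroup X] [Module K X]
variable {Y : Type*} [AddCommGroup Y] [Module K Y]

/-- The multiplication as a map on the tensor square. -/
def XData.mulU (M : XData K A X) : X ⊗[K] X →ₗ[K] X := TensorProduct.lift M.mul

/-- The action as a map on the tensor product. -/
def XData.actU (M : XData K A X) : A ⊗[K] X →ₗ[K] X := TensorProduct.lift M.act

/-- The braiding `c_{Y,X} : y ⊗ x ↦ (y₍₋₁₎ ▷ x) ⊗ y₍₀₎` of Yetter–Drinfeld modules. -/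
def braidMap (coactY : Y →ₗ[K] A ⊗[K] Y) (actX : A →ₗ[K] X →ₗ[K] X) :
    Y ⊗[K] X →ₗ[K] X ⊗[K] Y :=
  (rTensor Y (TensorProduct.lift actX)) ∘ₗ
  (TensorProduct.assoc K A X Y).symm.toLinearMap ∘ₗ
  (lTensor A (TensorProduct.comm K Y X).toLinearMap) ∘ₗ
  (TensorProduct.assoc K A Y X).toLinearMap ∘ₗ
  (rTensor X coactY)

/-- The inverse braiding `c⁻¹_{X,Y} : y ⊗ x ↦ x₍₀₎ ⊗ (S⁻¹(x₍₋₁₎) ▷ y)`. -/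
def braidInvMap (coactX : X →ₗ[K] A ⊗[K] X) (actY : A →ₗ[K] Y →ₗ[K] Y)
    (Sinv : A →ₗ[K] A) : Y ⊗[K] X →ₗ[K] X ⊗[K] Y :=
  (lTensor X (TensorProduct.lift actY)) ∘ₗ
  (TensorProduct.assoc K X A Y).toLinearMap ∘ₗ
  (rTensor Y (TensorProduct.comm K A X).toLinearMap) ∘ₗ
  (rTensor Y (rTensor X Sinv)) ∘ₗ
  (rTensor Y coactX) ∘ₗ
  (TensorProduct.comm K Y X).toLinearMap

/-- `x ⊗ y ↦ Σ (h₁ ▷ x) ⊗ (h₂ ▷ y)` for `h₁ ⊗ h₂` ranging over a tensor of the acting object. -/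
def XData.actT (M : XData K A X) :
    (A ⊗[K] A) →ₗ[K] (X ⊗[K] X) →ₗ[K] (X ⊗[K] X) :=
  TensorProduct.lift (((TensorProduct.mapBilinear (RingHom.id K) X X X X).comp M.act).compl₂ M.act)

/-- The multiplication of the tensor-product algebra `A ⊗ X`. -/
def mulAX (G : GData K A) (M : XData K A X) :
    (A ⊗[K] X) ⊗[K] (A ⊗[K] X) →ₗ[K] A ⊗[K] X :=
  (TensorProduct.map (TensorProduct.lift G.mul) M.mulU) ∘ₗ
    (TensorProduct.tensorTensorTensorComm K A X A X).toLinearMap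

/-- Left side of the Yetter–Drinfeld condition: `h ⊗ x ↦ Σ (h₁ ▷ x)₍₋₁₎ h₂ ⊗ (h₁ ▷ x)₍₀₎`. -/
def ydL (G : GData K A) (M : XData K A X) : A ⊗[K] X →ₗ[K] A ⊗[K] X :=
  (rTensor X (TensorProduct.lift G.mul)) ∘ₗ
  (TensorProduct.assoc K A A X).symm.toLinearMap ∘ₗ
  (lTensor A (TensorProduct.comm K X A).toLinearMap) ∘ₗ
  (TensorProduct.assoc K A X A).toLinearMap ∘ₗ
  (rTensor A (M.coact ∘ₗ M.actU)) ∘ₗ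
  (TensorProduct.assoc K A X A).symm.toLinearMap ∘ₗ
  (lTensor A (TensorProduct.comm K A X).toLinearMap) ∘ₗ
  (TensorProduct.assoc K A A X).toLinearMap ∘ₗ
  (rTensor X G.comul)

/-- Right side of the Yetter–Drinfeld condition: `h ⊗ x ↦ Σ h₁ x₍₋₁₎ ⊗ (h₂ ▷ x₍₀₎)`. -/
def ydR (G : GData K A) (M : XData K A X) : A ⊗[K] X →ₗ[K] A ⊗[K] X :=
  (TensorProduct.map (TensorProduct.lift G.mul) M.actU) ∘ₗ
  (TensorProduct.tensorTensorTensorComm K A A A X).toLinearMap ∘ₗ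
  (TensorProduct.map G.comul M.coact)

/-- `X` (with the data `M`) is a left–left Yetter–Drinfeld module algebra over `A`
(with the bialgebra data `G`). -/
structure IsYDMA (G : GData K A) (M : XData K A X) : Prop where
  mul_assoc : ∀ x y z : X, M.mul (M.mul x y) z = M.mul x (M.mul y z)
  one_mul : ∀ x : X, M.mul M.one x = x
  mul_one : ∀ x : X, M.mul x M.one = x
  act_one : M.act G.one = LinearMap.id
  act_mul : ∀ h g : A, M.act (G.mul h g) = (M.act h) ∘ₗ (M.act g)
  act_mul_distrib : ∀ h : A, (M.act h) ∘ₗ M.mulU = M.mulU ∘ₗ (M.actT (G.comul h))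
  act_unit : ∀ h : A, M.act h M.one = G.counit h • M.one
  coassoc : (TensorProduct.assoc K A A X).toLinearMap ∘ₗ (rTensor X G.comul) ∘ₗ M.coact
      = (lTensor A M.coact) ∘ₗ M.coact
  counit_coact : ∀ x : X, (TensorProduct.lid K X) ((rTensor X G.counit) (M.coact x)) = x
  coact_mul : M.coact ∘ₗ M.mulU = (mulAX G M) ∘ₗ (TensorProduct.map M.coact M.coact)
  coact_one : M.coact M.one = G.one ⊗ₜ[K] M.one
  yd : ydL G M = ydR G M

/-- Braided commutativity: `y x = (y₍₋₁₎ ▷ x) y₍₀₎`. -/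
def XData.IsBraidedComm (M : XData K A X) : Prop :=
  ∀ x y : X, M.mul y x = M.mulU (braidMap M.coact M.act (y ⊗ₜ[K] x))

/-- Two Yetter–Drinfeld modules are braided symmetric:
`(y₍₋₁₎ ▷ x) ⊗ y₍₀₎ = x₍₀₎ ⊗ (S⁻¹(x₍₋₁₎) ▷ y)` for all `x, y`. -/
def BraidedSymm (MX : XData K A X) (MY : XData K A Y) (Sinv : A →ₗ[K] A) : Prop :=
  ∀ (y : Y) (x : X),
    braidMap MY.coact MX.act (y ⊗ₜ[K] x)
      = braidInvMap MX.coact MY.act Sinv (y ⊗ₜ[K] x)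

/-- The braided product `X ⋈ Y` of two Yetter–Drinfeld module algebras:
`(x ⋈ y)(v ⋈ u) = x (y₍₋₁₎ ▷ v) ⋈ y₍₀₎ u`, with the diagonal action and
codiagonal coaction. -/
def bp (G : GData K A) (MX : XData K A X) (MY : XData K A Y) :
    XData K A (X ⊗[K] Y) where
  mul := TensorProduct.lift
    (((LinearMap.llcomp K (X ⊗[K] Y) (X ⊗[K] Y) (X ⊗[K] Y)).comp
        ((LinearMap.rTensorHom Y).comp MX.mul)).compl₂
      ((TensorProduct.lift
          (((TensorProduct.mapBilinear (RingHom.id K) X Y X Y).comp MX.act).compl₂ MY.mul)).comp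
        MY.coact))
  one := MX.one ⊗ₜ[K] MY.one
  act := (TensorProduct.lift
      (((TensorProduct.mapBilinear (RingHom.id K) X Y X Y).comp MX.act).compl₂ MY.act)).comp
      G.comul
  coact := (rTensor (X ⊗[K] Y) (TensorProduct.lift G.mul)) ∘ₗ
    (TensorProduct.tensorTensorTensorComm K A X A Y).toLinearMap ∘ₗ
    (TensorProduct.map MX.coact MY.coact)

/-- The bialgebra data of a Hopf algebra. -/
def GData.ofHopf (K H : Type*) [Field K] [Ring H] [HopfAlgebra K H] : GData K H :=
  ⟨LinearMap.mul K H, 1, Coalgebra.comul, Coalgebra.counit⟩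

end AbstractLayer


variable {K : Type u} [Field K]
variable {H : Type v} [Ring H] [HopfAlgebra K H]
variable {X : Type w} [AddCommGroup X] [Module K X]
variable {Y : Type*} [AddCommGroup Y] [Module K Y]

-- ===================== auxiliary lemmas =====================
section HopfHelpers
open Coalgebra
variable {K₀ : Type*} [Field K₀] {H₀ : Type*} [Ring H₀] [HopfAlgebra K₀ H₀]
local notation "S₀" => HopfAlgebra.antipode (R:=K₀)
local notation "ε₀" => Coalgebra.counit (R:=K₀)

lemma epsRight' (a : H₀) (r : Coalgebra.Repr K₀ a (H₀ × H₀)) :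
    ∑ i ∈ r.index, ε₀ (r.right i) • r.left i = a := by
  have h := Coalgebra.sum_tmul_counit_eq (R:=K₀) r
  calc ∑ i ∈ r.index, ε₀ (r.right i) • r.left i
      = TensorProduct.rid K₀ H₀ (∑ i ∈ r.index, r.left i ⊗ₜ[K₀] ε₀ (r.right i)) := by
        rw [map_sum]; simp
    _ = TensorProduct.rid K₀ H₀ (a ⊗ₜ[K₀] 1) := by rw [h]
    _ = a := by simp

lemma epsLeft' (a : H₀) (r : Coalgebra.Repr K₀ a (H₀ × H₀)) :
    ∑ i ∈ r.index, ε₀ (r.left i) • r.right i = a := by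
  have h := Coalgebra.sum_counit_tmul_eq (R:=K₀) r
  calc ∑ i ∈ r.index, ε₀ (r.left i) • r.right i
      = TensorProduct.lid K₀ H₀ (∑ i ∈ r.index, ε₀ (r.left i) ⊗ₜ[K₀] r.right i) := by
        rw [map_sum]; simp
    _ = TensorProduct.lid K₀ H₀ ((1:K₀) ⊗ₜ[K₀] a) := by rw [h]
    _ = a := by simp

lemma Sone' : HopfAlgebra.antipode (R:=K₀) (1:H₀) = 1 := by
  have h := HopfAlgebra.mul_antipode_rTensor_comul_apply (R:=K₀) (A:=H₀) (a := 1)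
  rw [Bialgebra.comul_one, Algebra.TensorProduct.one_def] at h
  simpa using h

lemma comul_mul_repr (c d : H₀) (rc : Coalgebra.Repr K₀ c (H₀ × H₀)) (rd : Coalgebra.Repr K₀ d (H₀ × H₀)) :
    Coalgebra.comul (R:=K₀) (c*d)
      = ∑ k ∈ rc.index, ∑ l ∈ rd.index,
          (rc.left k * rd.left l) ⊗ₜ[K₀] (rc.right k * rd.right l) := by
  have hm : Coalgebra.comul (R:=K₀) (c*d) = Coalgebra.comul c * Coalgebra.comul d := by
    simpa using map_mul (Bialgebra.comulAlgHom K₀ H₀) c d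
  rw [hm, ← rc.eq, ← rd.eq, Finset.sum_mul_sum]
  simp [Algebra.TensorProduct.tmul_mul_tmul]

lemma key1 (c d : H₀) (rc : Coalgebra.Repr K₀ c (H₀ × H₀)) (rd : Coalgebra.Repr K₀ d (H₀ × H₀)) :
    ∑ k ∈ rc.index, ∑ l ∈ rd.index,
      S₀ (rc.left k * rd.left l) * (rc.right k * rd.right l)
    = (ε₀ c * ε₀ d) • (1:H₀) := by
  have h := HopfAlgebra.mul_antipode_rTensor_comul_apply (R:=K₀) (A:=H₀) (a := c*d)
  rw [comul_mul_repr c d rc rd] at h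
  simp only [map_sum, LinearMap.rTensor_tmul, LinearMap.mul'_apply] at h
  rw [h]
  have : ε₀ (c * d) = ε₀ c * ε₀ d := by
    simpa using map_mul (Bialgebra.counitAlgHom K₀ H₀) c d
  rw [this, Algebra.algebraMap_eq_smul_one]

lemma antipode_mul' (a b : H₀) : S₀ (a * b) = S₀ b * S₀ a := by
  classical
  set ra := Coalgebra.Repr.arbitrary K₀ a with hra
  set rb := Coalgebra.Repr.arbitrary K₀ b with hrb
  set r2a : ∀ i, Coalgebra.Repr K₀ (ra.right i) (H₀ × H₀) := fun i => Coalgebra.Repr.arbitrary K₀ _ with hr2a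
  set l2a : ∀ i, Coalgebra.Repr K₀ (ra.left i) (H₀ × H₀) := fun i => Coalgebra.Repr.arbitrary K₀ _ with hl2a
  set r2b : ∀ j, Coalgebra.Repr K₀ (rb.right j) (H₀ × H₀) := fun j => Coalgebra.Repr.arbitrary K₀ _ with hr2b
  set l2b : ∀ j, Coalgebra.Repr K₀ (rb.left j) (H₀ × H₀) := fun j => Coalgebra.Repr.arbitrary K₀ _ with hl2b
  set T : H₀ := ∑ j ∈ rb.index, ∑ l ∈ (r2b j).index, ∑ i ∈ ra.index, ∑ k ∈ (r2a i).index,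
      S₀ (ra.left i * rb.left j) *
        ((r2a i).left k * ((r2b j).left l * (S₀ ((r2b j).right l) * S₀ ((r2a i).right k)))) with hT
  have claimA : T = S₀ (a * b) := by
    have step1 : T = ∑ j ∈ rb.index, ∑ i ∈ ra.index,
        ε₀ (rb.right j) • (ε₀ (ra.right i) • S₀ (ra.left i * rb.left j)) := by
      rw [hT]
      refine Finset.sum_congr rfl fun j _ => ?_
      rw [Finset.sum_comm]
      refine Finset.sum_congr rfl fun i _ => ?_
      rw [Finset.sum_comm]
      have inner1 : ∀ k, ∑ l ∈ (r2b j).index,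
          S₀ (ra.left i * rb.left j) *
            ((r2a i).left k * ((r2b j).left l * (S₀ ((r2b j).right l) * S₀ ((r2a i).right k))))
          = ε₀ (rb.right j) •
            (S₀ (ra.left i * rb.left j) * ((r2a i).left k * S₀ ((r2a i).right k))) := by
        intro k
        have hin : ∑ l ∈ (r2b j).index,
            (r2b j).left l * (S₀ ((r2b j).right l) * S₀ ((r2a i).right k))
            = ε₀ (rb.right j) • S₀ ((r2a i).right k) := by
          calc ∑ l ∈ (r2b j).index, (r2b j).left l * (S₀ ((r2b j).right l) * S₀ ((r2a i).right k))
              = (∑ l ∈ (r2b j).index, (r2b j).left l * S₀ ((r2b j).right l)) * S₀ ((r2a i).right k) := by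
                rw [Finset.sum_mul]; simp [mul_assoc]
            _ = (ε₀ (rb.right j) • (1:H₀)) * S₀ ((r2a i).right k) := by
                rw [HopfAlgebra.sum_mul_antipode_eq_smul (r2b j)]
            _ = ε₀ (rb.right j) • S₀ ((r2a i).right k) := by rw [smul_mul_assoc, one_mul]
        rw [← Finset.mul_sum, ← Finset.mul_sum, hin, mul_smul_comm, mul_smul_comm]
      calc ∑ k ∈ (r2a i).index, ∑ l ∈ (r2b j).index,
            S₀ (ra.left i * rb.left j) *
              ((r2a i).left k * ((r2b j).left l * (S₀ ((r2b j).right l) * S₀ ((r2a i).right k))))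
          = ∑ k ∈ (r2a i).index, ε₀ (rb.right j) •
              (S₀ (ra.left i * rb.left j) * ((r2a i).left k * S₀ ((r2a i).right k))) :=
            Finset.sum_congr rfl fun k _ => inner1 k
        _ = ε₀ (rb.right j) • (S₀ (ra.left i * rb.left j) *
              ∑ k ∈ (r2a i).index, (r2a i).left k * S₀ ((r2a i).right k)) := by
            rw [← Finset.smul_sum, Finset.mul_sum]
        _ = ε₀ (rb.right j) • (ε₀ (ra.right i) • S₀ (ra.left i * rb.left j)) := by
            rw [HopfAlgebra.sum_mul_antipode_eq_smul (r2a i), mul_smul_comm, mul_one]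
    rw [step1]
    have step2 : ∀ j, ∑ i ∈ ra.index, ε₀ (ra.right i) • S₀ (ra.left i * rb.left j)
        = S₀ (a * rb.left j) := by
      intro j
      have := congrArg (S₀ ∘ₗ mulRight K₀ (rb.left j)) (epsRight'  a ra)
      simpa [map_sum, Finset.smul_sum] using this
    calc ∑ j ∈ rb.index, ∑ i ∈ ra.index,
          ε₀ (rb.right j) • (ε₀ (ra.right i) • S₀ (ra.left i * rb.left j))
        = ∑ j ∈ rb.index, ε₀ (rb.right j) • S₀ (a * rb.left j) := by
          refine Finset.sum_congr rfl fun j _ => ?_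
          rw [← Finset.smul_sum, step2 j]
      _ = S₀ (a * b) := by
          have := congrArg (S₀ ∘ₗ mulLeft K₀ a) (epsRight'  b rb)
          simpa [map_sum, Finset.smul_sum] using this
  have claimB : T = S₀ b * S₀ a := by
    have EA := Coalgebra.sum_tmul_tmul_eq (R:=K₀) ra l2a r2a
    have EB := Coalgebra.sum_tmul_tmul_eq (R:=K₀) rb l2b r2b
    have switchA : ∀ (j : H₀ × H₀) (l : H₀ × H₀),
        (∑ i ∈ ra.index, ∑ k ∈ (r2a i).index,
          S₀ (ra.left i * rb.left j) *
            ((r2a i).left k * ((r2b j).left l * (S₀ ((r2b j).right l) * S₀ ((r2a i).right k)))))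
        = ∑ i ∈ ra.index, ∑ k ∈ (l2a i).index,
          S₀ ((l2a i).left k * rb.left j) *
            ((l2a i).right k * ((r2b j).left l * (S₀ ((r2b j).right l) * S₀ (ra.right i)))) := by
      intro j l
      set F : H₀ ⊗[K₀] (H₀ ⊗[K₀] H₀) →ₗ[K₀] H₀ :=
        mul' K₀ H₀ ∘ₗ map (S₀ ∘ₗ mulRight K₀ (rb.left j))
          (mul' K₀ H₀ ∘ₗ lTensor H₀
            (mulLeft K₀ ((r2b j).left l) ∘ₗ mulLeft K₀ (S₀ ((r2b j).right l)) ∘ₗ S₀)) with hF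
      have := congrArg F EA.symm
      simpa only [hF, map_sum, comp_apply, map_tmul, lTensor_tmul, mul'_apply,
        coe_comp, Function.comp_apply, mulLeft_apply, mulRight_apply] using this
    have switchB : ∀ (i : H₀ × H₀) (k : H₀ × H₀),
        (∑ j ∈ rb.index, ∑ l ∈ (r2b j).index,
          S₀ ((l2a i).left k * rb.left j) *
            ((l2a i).right k * ((r2b j).left l * (S₀ ((r2b j).right l) * S₀ (ra.right i)))))
        = ∑ j ∈ rb.index, ∑ l ∈ (l2b j).index,
          S₀ ((l2a i).left k * (l2b j).left l) *
            ((l2a i).right k * ((l2b j).right l * (S₀ (rb.right j) * S₀ (ra.right i)))) := by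
      intro i k
      set G : H₀ ⊗[K₀] (H₀ ⊗[K₀] H₀) →ₗ[K₀] H₀ :=
        mul' K₀ H₀ ∘ₗ map (S₀ ∘ₗ mulLeft K₀ ((l2a i).left k))
          (mulLeft K₀ ((l2a i).right k) ∘ₗ mul' K₀ H₀ ∘ₗ lTensor H₀
            (mulRight K₀ (S₀ (ra.right i)) ∘ₗ S₀)) with hG
      have := congrArg G EB.symm
      simpa only [hG, map_sum, comp_apply, map_tmul, lTensor_tmul, mul'_apply,
        coe_comp, Function.comp_apply, mulLeft_apply, mulRight_apply] using this
    calc T = ∑ j ∈ rb.index, ∑ l ∈ (r2b j).index, ∑ i ∈ ra.index, ∑ k ∈ (l2a i).index,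
          S₀ ((l2a i).left k * rb.left j) *
            ((l2a i).right k * ((r2b j).left l * (S₀ ((r2b j).right l) * S₀ (ra.right i)))) := by
            rw [hT]
            exact Finset.sum_congr rfl fun j _ => Finset.sum_congr rfl fun l _ => switchA j l
      _ = ∑ i ∈ ra.index, ∑ k ∈ (l2a i).index, ∑ j ∈ rb.index, ∑ l ∈ (r2b j).index,
          S₀ ((l2a i).left k * rb.left j) *
            ((l2a i).right k * ((r2b j).left l * (S₀ ((r2b j).right l) * S₀ (ra.right i)))) := by
        refine (Finset.sum_congr rfl fun j _ => Finset.sum_comm).trans ?_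
        rw [Finset.sum_comm]
        refine Finset.sum_congr rfl fun i _ => ?_
        refine (Finset.sum_congr rfl fun j _ => Finset.sum_comm).trans ?_
        exact Finset.sum_comm
      _ = ∑ i ∈ ra.index, ∑ k ∈ (l2a i).index, ∑ j ∈ rb.index, ∑ l ∈ (l2b j).index,
          S₀ ((l2a i).left k * (l2b j).left l) *
            ((l2a i).right k * ((l2b j).right l * (S₀ (rb.right j) * S₀ (ra.right i)))) :=
        Finset.sum_congr rfl fun i _ => Finset.sum_congr rfl fun k _ => switchB i k
      _ = ∑ i ∈ ra.index, ∑ j ∈ rb.index, ∑ k ∈ (l2a i).index, ∑ l ∈ (l2b j).index,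
          S₀ ((l2a i).left k * (l2b j).left l) *
            ((l2a i).right k * ((l2b j).right l * (S₀ (rb.right j) * S₀ (ra.right i)))) :=
        Finset.sum_congr rfl fun i _ => Finset.sum_comm
      _ = ∑ i ∈ ra.index, ∑ j ∈ rb.index,
            (ε₀ (ra.left i) * ε₀ (rb.left j)) • (S₀ (rb.right j) * S₀ (ra.right i)) := by
        refine Finset.sum_congr rfl fun i _ => Finset.sum_congr rfl fun j _ => ?_
        calc ∑ k ∈ (l2a i).index, ∑ l ∈ (l2b j).index,
              S₀ ((l2a i).left k * (l2b j).left l) *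
                ((l2a i).right k * ((l2b j).right l * (S₀ (rb.right j) * S₀ (ra.right i))))
            = (∑ k ∈ (l2a i).index, ∑ l ∈ (l2b j).index,
                S₀ ((l2a i).left k * (l2b j).left l) * ((l2a i).right k * (l2b j).right l))
                * (S₀ (rb.right j) * S₀ (ra.right i)) := by
              rw [Finset.sum_mul]
              refine Finset.sum_congr rfl fun k _ => ?_
              rw [Finset.sum_mul]
              exact Finset.sum_congr rfl fun l _ => by simp only [mul_assoc]
          _ = (ε₀ (ra.left i) * ε₀ (rb.left j)) • (S₀ (rb.right j) * S₀ (ra.right i)) := by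
              rw [key1 (ra.left i) (rb.left j) (l2a i) (l2b j), smul_mul_assoc, one_mul]
      _ = S₀ b * S₀ a := by
        have hb : ∀ c : H₀, ∑ j ∈ rb.index, ε₀ (rb.left j) • (S₀ (rb.right j) * c) = S₀ b * c := by
          intro c
          have := congrArg (mulRight K₀ c ∘ₗ S₀) (epsLeft'  b rb)
          simpa [map_sum, Finset.smul_sum, smul_mul_assoc] using this
        calc ∑ i ∈ ra.index, ∑ j ∈ rb.index,
              (ε₀ (ra.left i) * ε₀ (rb.left j)) • (S₀ (rb.right j) * S₀ (ra.right i))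
            = ∑ i ∈ ra.index, ε₀ (ra.left i) • (S₀ b * S₀ (ra.right i)) := by
              refine Finset.sum_congr rfl fun i _ => ?_
              rw [← hb (S₀ (ra.right i)), Finset.smul_sum]
              exact Finset.sum_congr rfl fun j _ => mul_smul _ _ _
          _ = S₀ b * S₀ a := by
              have := congrArg (mulLeft K₀ (S₀ b) ∘ₗ S₀) (epsLeft'  a ra)
              simpa [map_sum, Finset.smul_sum, mul_smul_comm] using this
  rw [← claimA, claimB]


end HopfHelpers

section SinvHelpers
open Coalgebra
variable {K₀ : Type*} [Field K₀] {H₀ : Type*} [Ring H₀] [HopfAlgebra K₀ H₀]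
local notation "S₀" => HopfAlgebra.antipode (R:=K₀)
local notation "ε₀" => Coalgebra.counit (R:=K₀)

lemma sinv_one (Sinv : H₀ →ₗ[K₀] H₀)
    (hS : Sinv ∘ₗ HopfAlgebra.antipode (R := K₀) = LinearMap.id) : Sinv 1 = 1 := by
  have h := LinearMap.congr_fun hS (1:H₀)
  rw [LinearMap.comp_apply, Sone'] at h
  simpa using h

lemma G1point (Sinv : H₀ →ₗ[K₀] H₀)
    (hS : Sinv ∘ₗ HopfAlgebra.antipode (R := K₀) = LinearMap.id)
    (hS' : HopfAlgebra.antipode (R := K₀) ∘ₗ Sinv = LinearMap.id)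
    (d : H₀) (rd : Coalgebra.Repr K₀ d (H₀ × H₀)) :
    ∑ m ∈ rd.index, Sinv (rd.right m) * rd.left m = ε₀ d • (1:H₀) := by
  have hSa : ∀ z : H₀, Sinv (S₀ z) = z := fun z => LinearMap.congr_fun hS z
  have hSb : ∀ z : H₀, S₀ (Sinv z) = z := fun z => LinearMap.congr_fun hS' z
  have hT : S₀ (∑ m ∈ rd.index, Sinv (rd.right m) * rd.left m) = ε₀ d • (1:H₀) := by
    rw [map_sum]
    calc ∑ m ∈ rd.index, S₀ (Sinv (rd.right m) * rd.left m)
        = ∑ m ∈ rd.index, S₀ (rd.left m) * rd.right m := by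
          refine Finset.sum_congr rfl fun m _ => ?_
          rw [antipode_mul', hSb]
      _ = ε₀ d • (1:H₀) := HopfAlgebra.sum_antipode_mul_eq_smul rd
  have := congrArg Sinv hT
  rw [hSa] at this
  rw [this, map_smul, sinv_one Sinv hS]

end SinvHelpers

section MainHelpers
open Coalgebra

/-- collapse map `a ⊗ (c ⊗ x₀) ↦ (S⁻¹(c) * a) ⊗ x₀`. -/
def colX (Sinv : H →ₗ[K] H) : H ⊗[K] (H ⊗[K] X) →ₗ[K] H ⊗[K] X :=
  (rTensor X (LinearMap.mul' K H ∘ₗ rTensor H Sinv ∘ₗ (TensorProduct.comm K H H).toLinearMap)) ∘ₗ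
    (TensorProduct.assoc K H H X).symm.toLinearMap

@[simp] lemma colX_tmul (Sinv : H →ₗ[K] H) (a c : H) (x₀ : X) :
    colX (X:=X) Sinv (a ⊗ₜ[K] (c ⊗ₜ[K] x₀)) = (Sinv c * a) ⊗ₜ[K] x₀ := by
  simp [colX]

lemma braidMap_expand (coactY : Y →ₗ[K] H ⊗[K] Y) (actX : H →ₗ[K] X →ₗ[K] X)
    (y : Y) (x : X) (W : Finset (H × Y)) (hW : coactY y = ∑ r ∈ W, r.1 ⊗ₜ[K] r.2) :
    braidMap coactY actX (y ⊗ₜ[K] x) = ∑ r ∈ W, (actX r.1 x) ⊗ₜ[K] r.2 := by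
  simp [braidMap, hW, TensorProduct.sum_tmul, map_sum]

lemma braidInvMap_expand (coactX : X →ₗ[K] H ⊗[K] X) (actY : H →ₗ[K] Y →ₗ[K] Y)
    (Sinv : H →ₗ[K] H) (y : Y) (x : X) (W : Finset (H × X))
    (hW : coactX x = ∑ r ∈ W, r.1 ⊗ₜ[K] r.2) :
    braidInvMap coactX actY Sinv (y ⊗ₜ[K] x) = ∑ r ∈ W, r.2 ⊗ₜ[K] (actY (Sinv r.1) y) := by
  simp [braidInvMap, hW, TensorProduct.sum_tmul, map_sum]

lemma counit_coact_sum (MX : XData K H X) (hX : IsYDMA (GData.ofHopf K H) MX)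
    (x' : X) (W : Finset (H × X)) (hW : MX.coact x' = ∑ r ∈ W, r.1 ⊗ₜ[K] r.2) :
    ∑ r ∈ W, Coalgebra.counit (R:=K) r.1 • r.2 = x' := by
  have h := hX.counit_coact x'
  rw [hW] at h
  simp only [GData.ofHopf, map_sum, rTensor_tmul] at h
  simpa [TensorProduct.smul_tmul'] using h

lemma coassoc_sum (MX : XData K H X) (hX : IsYDMA (GData.ofHopf K H) MX)
    (x : X) (Sx : Finset (H × X)) (hx : MX.coact x = ∑ p ∈ Sx, p.1 ⊗ₜ[K] p.2)
    (W : (H × X) → Finset (H × X)) (hW : ∀ p ∈ Sx, MX.coact p.2 = ∑ r ∈ W p, r.1 ⊗ₜ[K] r.2)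
    (rp : ∀ p : H × X, Coalgebra.Repr K p.1 (H × H)) :
    ∑ p ∈ Sx, ∑ r ∈ W p, p.1 ⊗ₜ[K] (r.1 ⊗ₜ[K] r.2)
    = ∑ p ∈ Sx, ∑ k ∈ (rp p).index, (rp p).left k ⊗ₜ[K] ((rp p).right k ⊗ₜ[K] p.2) := by
  have hca := LinearMap.congr_fun hX.coassoc x
  simp only [GData.ofHopf, LinearMap.comp_apply, LinearEquiv.coe_coe] at hca
  rw [hx] at hca
  simp only [map_sum, rTensor_tmul, lTensor_tmul] at hca
  calc ∑ p ∈ Sx, ∑ r ∈ W p, p.1 ⊗ₜ[K] (r.1 ⊗ₜ[K] r.2)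
      = ∑ p ∈ Sx, p.1 ⊗ₜ[K] MX.coact p.2 := by
        refine Finset.sum_congr rfl fun p hp => ?_
        rw [hW p hp, TensorProduct.tmul_sum]
    _ = ∑ p ∈ Sx, (TensorProduct.assoc K H H X) ((Coalgebra.comul (R:=K) p.1) ⊗ₜ[K] p.2) :=
        hca.symm
    _ = ∑ p ∈ Sx, ∑ k ∈ (rp p).index, (rp p).left k ⊗ₜ[K] ((rp p).right k ⊗ₜ[K] p.2) := by
        refine Finset.sum_congr rfl fun p hp => ?_
        rw [← (rp p).eq, TensorProduct.sum_tmul, map_sum]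
        simp

lemma GX (Sinv : H →ₗ[K] H)
    (hS : Sinv ∘ₗ HopfAlgebra.antipode (R := K) = LinearMap.id)
    (hS' : HopfAlgebra.antipode (R := K) ∘ₗ Sinv = LinearMap.id)
    (MX : XData K H X) (hX : IsYDMA (GData.ofHopf K H) MX)
    (x' : X) (W : Finset (H × X)) (hW : MX.coact x' = ∑ r ∈ W, r.1 ⊗ₜ[K] r.2) :
    ∑ r ∈ W, colX (X:=X) Sinv (r.1 ⊗ₜ[K] MX.coact r.2) = (1:H) ⊗ₜ[K] x' := by
  classical
  have hca := LinearMap.congr_fun hX.coassoc x'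
  simp only [GData.ofHopf, LinearMap.comp_apply, LinearEquiv.coe_coe] at hca
  have e1 : ∑ r ∈ W, colX (X:=X) Sinv (r.1 ⊗ₜ[K] MX.coact r.2)
      = colX (X:=X) Sinv ((lTensor H MX.coact) (MX.coact x')) := by
    rw [hW, map_sum, map_sum]
    simp
  rw [e1, ← hca, hW]
  simp only [map_sum, rTensor_tmul]
  calc ∑ r ∈ W, colX (X:=X) Sinv
          ((TensorProduct.assoc K H H X) ((Coalgebra.comul (R:=K) r.1) ⊗ₜ[K] r.2))
      = ∑ r ∈ W, (Coalgebra.counit (R:=K) r.1 • (1:H)) ⊗ₜ[K] r.2 := by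
        refine Finset.sum_congr rfl fun r _ => ?_
        rw [← (Coalgebra.Repr.arbitrary K r.1).eq, TensorProduct.sum_tmul, map_sum, map_sum]
        simp only [TensorProduct.assoc_tmul, colX_tmul]
        rw [← TensorProduct.sum_tmul,
          G1point Sinv hS hS' r.1 (Coalgebra.Repr.arbitrary K r.1)]
    _ = (1:H) ⊗ₜ[K] x' := by
        rw [← counit_coact_sum MX hX x' W hW, TensorProduct.tmul_sum]
        exact Finset.sum_congr rfl fun r _ => TensorProduct.smul_tmul _ _ _

end MainHelpers

section MainHelpers2
open Coalgebra

lemma xkey (Sinv : H →ₗ[K] H)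
    (hS : Sinv ∘ₗ HopfAlgebra.antipode (R := K) = LinearMap.id)
    (hS' : HopfAlgebra.antipode (R := K) ∘ₗ Sinv = LinearMap.id)
    (MX : XData K H X) (hX : IsYDMA (GData.ofHopf K H) MX)
    (x : X) (Sx : Finset (H × X)) (hx : MX.coact x = ∑ p ∈ Sx, p.1 ⊗ₜ[K] p.2)
    (W : (H × X) → Finset (H × X)) (hW : ∀ p ∈ Sx, MX.coact p.2 = ∑ r ∈ W p, r.1 ⊗ₜ[K] r.2)
    (rp : ∀ p : H × X, Coalgebra.Repr K p.1 (H × H)) :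
    ∑ p ∈ Sx, ∑ k ∈ (rp p).index, ∑ r ∈ W p,
      (rp p).left k ⊗ₜ[K] ((Sinv r.1 * (rp p).right k) ⊗ₜ[K] r.2)
    = ∑ p ∈ Sx, p.1 ⊗ₜ[K] ((1:H) ⊗ₜ[K] p.2) := by
  classical
  set Ω : H ⊗[K] (H ⊗[K] X) →ₗ[K] H ⊗[K] (H ⊗[K] X) :=
    lTensor H ((colX (X:=X) Sinv) ∘ₗ (lTensor H MX.coact)) with hΩ
  have e1 : ∑ p ∈ Sx, ∑ k ∈ (rp p).index, ∑ r ∈ W p,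
        (rp p).left k ⊗ₜ[K] ((Sinv r.1 * (rp p).right k) ⊗ₜ[K] r.2)
      = Ω (∑ p ∈ Sx, ∑ k ∈ (rp p).index,
          (rp p).left k ⊗ₜ[K] ((rp p).right k ⊗ₜ[K] p.2)) := by
    rw [map_sum]
    refine Finset.sum_congr rfl fun p hp => ?_
    rw [map_sum]
    refine Finset.sum_congr rfl fun k _ => ?_
    rw [hΩ]
    simp only [lTensor_tmul, LinearMap.comp_apply]
    rw [hW p hp, TensorProduct.tmul_sum, map_sum, TensorProduct.tmul_sum]
    simp
  rw [e1, ← coassoc_sum MX hX x Sx hx W hW rp, map_sum]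
  refine Finset.sum_congr rfl fun p hp => ?_
  rw [map_sum]
  calc ∑ r ∈ W p, Ω (p.1 ⊗ₜ[K] (r.1 ⊗ₜ[K] r.2))
      = ∑ r ∈ W p, p.1 ⊗ₜ[K] colX (X:=X) Sinv (r.1 ⊗ₜ[K] MX.coact r.2) := by
        refine Finset.sum_congr rfl fun r _ => ?_
        rw [hΩ]; simp
    _ = p.1 ⊗ₜ[K] ∑ r ∈ W p, colX (X:=X) Sinv (r.1 ⊗ₜ[K] MX.coact r.2) :=
        (TensorProduct.tmul_sum _ _ _).symm
    _ = p.1 ⊗ₜ[K] ((1:H) ⊗ₜ[K] p.2) := by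
        rw [GX Sinv hS hS' MX hX p.2 (W p) (hW p hp)]

end MainHelpers2

set_option synthInstance.maxHeartbeats 500000
section BpHelpers
open Coalgebra

lemma bp_coact_tmul (MX : XData K H X) (MY : XData K H Y) (x : X) (y : Y)
    (Sx : Finset (H × X)) (hx : MX.coact x = ∑ p ∈ Sx, p.1 ⊗ₜ[K] p.2)
    (Sy : Finset (H × Y)) (hy : MY.coact y = ∑ q ∈ Sy, q.1 ⊗ₜ[K] q.2) :
    (bp (GData.ofHopf K H) MX MY).coact (x ⊗ₜ[K] y)
      = ∑ p ∈ Sx, ∑ q ∈ Sy, (p.1 * q.1) ⊗ₜ[K] (p.2 ⊗ₜ[K] q.2) := by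
  simp only [bp, GData.ofHopf, LinearMap.comp_apply, TensorProduct.map_tmul, hx, hy,
    LinearEquiv.coe_coe]
  rw [TensorProduct.sum_tmul]
  simp only [TensorProduct.tmul_sum, map_sum]
  refine Finset.sum_congr rfl fun p _ => ?_
  refine Finset.sum_congr rfl fun q _ => ?_
  simp [TensorProduct.tensorTensorTensorComm_tmul]

lemma bp_act_mul_tmul (MX : XData K H X) (MY : XData K H Y) (c d : H)
    (rc : Coalgebra.Repr K c (H × H)) (rd : Coalgebra.Repr K d (H × H)) (v : X) (u : Y) :
    (bp (GData.ofHopf K H) MX MY).act (c * d) (v ⊗ₜ[K] u)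
      = ∑ k ∈ rc.index, ∑ l ∈ rd.index,
          (MX.act (rc.left k * rd.left l) v) ⊗ₜ[K] (MY.act (rc.right k * rd.right l) u) := by
  simp only [bp, GData.ofHopf, LinearMap.comp_apply]
  rw [comul_mul_repr c d rc rd]
  simp [map_sum]

lemma bp_mul_tmul (MX : XData K H X) (MY : XData K H Y) (A : X) (w : Y) (x' : X) (u' : Y) :
    (bp (GData.ofHopf K H) MX MY).mul (A ⊗ₜ[K] w) (x' ⊗ₜ[K] u')
      = TensorProduct.map (MX.mul A) ((MY.mul).flip u')
          (braidMap MY.coact MX.act (w ⊗ₜ[K] x')) := by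
  classical
  obtain ⟨W, hW⟩ := TensorProduct.exists_finset (MY.coact w)
  rw [braidMap_expand MY.coact MX.act w x' W hW]
  simp only [bp, TensorProduct.lift.tmul, LinearMap.comp_apply, LinearMap.compl₂_apply,
    LinearMap.llcomp_apply, hW, map_sum]
  simp [TensorProduct.mapBilinear_apply]

lemma bp_mul_sym (Sinv : H →ₗ[K] H) (MX : XData K H X) (MY : XData K H Y)
    (hsym : BraidedSymm MX MY Sinv) (A : X) (w : Y) (x' : X) (u' : Y)
    (W : Finset (H × X)) (hW : MX.coact x' = ∑ r ∈ W, r.1 ⊗ₜ[K] r.2) :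
    (bp (GData.ofHopf K H) MX MY).mul (A ⊗ₜ[K] w) (x' ⊗ₜ[K] u')
      = ∑ r ∈ W, (MX.mul A r.2) ⊗ₜ[K] (MY.mul (MY.act (Sinv r.1) w) u') := by
  rw [bp_mul_tmul, hsym w x', braidInvMap_expand MX.coact MY.act Sinv w x' W hW]
  simp

lemma bp_braid_expand (MX : XData K H X) (MY : XData K H Y) (x v : X) (y u : Y)
    (Sx : Finset (H × X)) (hx : MX.coact x = ∑ p ∈ Sx, p.1 ⊗ₜ[K] p.2)
    (Sy : Finset (H × Y)) (hy : MY.coact y = ∑ q ∈ Sy, q.1 ⊗ₜ[K] q.2) :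
    braidMap (bp (GData.ofHopf K H) MX MY).coact (bp (GData.ofHopf K H) MX MY).act
        ((x ⊗ₜ[K] y) ⊗ₜ[K] (v ⊗ₜ[K] u))
      = ∑ p ∈ Sx, ∑ q ∈ Sy,
          ((bp (GData.ofHopf K H) MX MY).act (p.1 * q.1) (v ⊗ₜ[K] u)) ⊗ₜ[K] (p.2 ⊗ₜ[K] q.2) := by
  simp only [braidMap, LinearMap.comp_apply, LinearEquiv.coe_coe, rTensor_tmul,
    bp_coact_tmul MX MY x y Sx hx Sy hy]
  rw [TensorProduct.sum_tmul]
  simp only [TensorProduct.sum_tmul, map_sum]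
  refine Finset.sum_congr rfl fun p _ => Finset.sum_congr rfl fun q _ => ?_
  simp [XData.actU]

end BpHelpers
/-- If `X` and `Y` are braided symmetric left–left Yetter–Drinfeld
`H`-module algebras, each braided commutative, then the braided product `X ⋈ Y`
is braided commutative:
`((x ⋈ y)₍₋₁₎ ▷ (v ⋈ u)) (x ⋈ y)₍₀₎ = (x ⋈ y)(v ⋈ u)` for all `x, v ∈ X`, `y, u ∈ Y`. -/
theorem braided_product_braided_commutative
    (Sinv : H →ₗ[K] H)
    (hS : Sinv ∘ₗ HopfAlgebra.antipode (R := K) = LinearMap.id)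
    (hS' : HopfAlgebra.antipode (R := K) ∘ₗ Sinv = LinearMap.id)
    (MX : XData K H X) (MY : XData K H Y)
    (hX : IsYDMA (GData.ofHopf K H) MX) (hY : IsYDMA (GData.ofHopf K H) MY)
    (hsym : BraidedSymm MX MY Sinv)
    (hXc : MX.IsBraidedComm) (hYc : MY.IsBraidedComm) :
    ∀ (x v : X) (y u : Y),
      (bp (GData.ofHopf K H) MX MY).mulU
        (braidMap (bp (GData.ofHopf K H) MX MY).coact
          (bp (GData.ofHopf K H) MX MY).act
          ((x ⊗ₜ[K] y) ⊗ₜ[K] (v ⊗ₜ[K] u)))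
      = (bp (GData.ofHopf K H) MX MY).mul (x ⊗ₜ[K] y) (v ⊗ₜ[K] u) := by

  intro x v y u
  classical
  obtain ⟨Sx, hx⟩ := TensorProduct.exists_finset (MX.coact x)
  obtain ⟨Sy, hy⟩ := TensorProduct.exists_finset (MY.coact y)
  choose W hW using fun p : H × X => TensorProduct.exists_finset (MX.coact p.2)
  choose Wy hWy using fun q : H × Y => TensorProduct.exists_finset (MY.coact q.2)
  set rp : ∀ p : H × X, Coalgebra.Repr K p.1 (H × H) := fun p => Coalgebra.Repr.arbitrary K p.1 with hrp
  set rq : ∀ q : H × Y, Coalgebra.Repr K q.1 (H × H) := fun q => Coalgebra.Repr.arbitrary K q.1 with hrq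
  have hacY : ∀ (h g : H) (u' : Y), MY.act h (MY.act g u') = MY.act (h * g) u' := by
    intro h g u'
    have h2 := hY.act_mul h g
    simp only [GData.ofHopf, LinearMap.mul_apply'] at h2
    rw [h2, LinearMap.comp_apply]
  have hacX : ∀ (h g : H) (v' : X), MX.act h (MX.act g v') = MX.act (h * g) v' := by
    intro h g v'
    have h2 := hX.act_mul h g
    simp only [GData.ofHopf, LinearMap.mul_apply'] at h2
    rw [h2, LinearMap.comp_apply]
  have hXcol : ∀ w' : X, ∑ p ∈ Sx, MX.mul (MX.act p.1 w') p.2 = MX.mul x w' := by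
    intro w'
    have h := hXc w' x
    rw [braidMap_expand MX.coact MX.act x w' Sx hx, map_sum] at h
    simp only [XData.mulU, TensorProduct.lift.tmul] at h
    exact h.symm
  have hYcol : ∀ q : H × Y, ∑ s ∈ Wy q, MY.mul (MY.act s.1 u) s.2 = MY.mul q.2 u := by
    intro q
    have h := hYc u q.2
    rw [braidMap_expand MY.coact MY.act q.2 u (Wy q) (hWy q), map_sum] at h
    simp only [XData.mulU, TensorProduct.lift.tmul] at h
    exact h.symm
  have hRHS : (bp (GData.ofHopf K H) MX MY).mul (x ⊗ₜ[K] y) (v ⊗ₜ[K] u)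
      = ∑ q ∈ Sy, (MX.mul x (MX.act q.1 v)) ⊗ₜ[K] (MY.mul q.2 u) := by
    rw [bp_mul_tmul, braidMap_expand MY.coact MX.act y v Sy hy]
    simp
  have h1 : (bp (GData.ofHopf K H) MX MY).mulU
      (braidMap (bp (GData.ofHopf K H) MX MY).coact (bp (GData.ofHopf K H) MX MY).act
        ((x ⊗ₜ[K] y) ⊗ₜ[K] (v ⊗ₜ[K] u)))
      = ∑ p ∈ Sx, ∑ q ∈ Sy,
          (bp (GData.ofHopf K H) MX MY).mul
            ((bp (GData.ofHopf K H) MX MY).act (p.1 * q.1) (v ⊗ₜ[K] u)) (p.2 ⊗ₜ[K] q.2) := by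
    rw [bp_braid_expand MX MY x v y u Sx hx Sy hy, map_sum]
    refine Finset.sum_congr rfl fun p _ => ?_
    rw [map_sum]
    exact Finset.sum_congr rfl fun q _ => by rw [XData.mulU, TensorProduct.lift.tmul]
  have h2 : ∀ p q, (bp (GData.ofHopf K H) MX MY).mul
        ((bp (GData.ofHopf K H) MX MY).act (p.1 * q.1) (v ⊗ₜ[K] u)) (p.2 ⊗ₜ[K] q.2)
      = ∑ k ∈ (rp p).index, ∑ l ∈ (rq q).index, ∑ r ∈ W p,
          (MX.mul (MX.act ((rp p).left k * (rq q).left l) v) r.2) ⊗ₜ[K]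
            (MY.mul (MY.act ((Sinv r.1 * (rp p).right k) * (rq q).right l) u) q.2) := by
    intro p q
    rw [bp_act_mul_tmul MX MY p.1 q.1 (rp p) (rq q) v u, map_sum]
    rw [LinearMap.coe_sum, Finset.sum_apply]
    refine Finset.sum_congr rfl fun k _ => ?_
    rw [map_sum, LinearMap.coe_sum, Finset.sum_apply]
    refine Finset.sum_congr rfl fun l _ => ?_
    rw [bp_mul_sym Sinv MX MY hsym _ _ p.2 q.2 (W p) (hW p)]
    refine Finset.sum_congr rfl fun r _ => ?_
    rw [hacY, ← mul_assoc]
  have h3 : ∀ q ∈ Sy, ∀ l ∈ (rq q).index,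
      (∑ p ∈ Sx, ∑ k ∈ (rp p).index, ∑ r ∈ W p,
        (MX.mul (MX.act ((rp p).left k * (rq q).left l) v) r.2) ⊗ₜ[K]
          (MY.mul (MY.act ((Sinv r.1 * (rp p).right k) * (rq q).right l) u) q.2))
      = ∑ p ∈ Sx,
        (MX.mul (MX.act (p.1 * (rq q).left l) v) p.2) ⊗ₜ[K]
          (MY.mul (MY.act ((1:H) * (rq q).right l) u) q.2) := by
    intro q _ l _
    set Φ : H ⊗[K] (H ⊗[K] X) →ₗ[K] X ⊗[K] Y :=
      (TensorProduct.comm K Y X).toLinearMap ∘ₗ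
      (TensorProduct.map
        ((MY.mul).flip q.2 ∘ₗ (MY.act).flip u ∘ₗ mulRight K ((rq q).right l))
        (TensorProduct.lift (MX.mul ∘ₗ (MX.act).flip v ∘ₗ mulRight K ((rq q).left l)))) ∘ₗ
      (TensorProduct.assoc K H H X).toLinearMap ∘ₗ
      (rTensor X (TensorProduct.comm K H H).toLinearMap) ∘ₗ
      (TensorProduct.assoc K H H X).symm.toLinearMap with hΦ
    have hkey := congrArg Φ (xkey Sinv hS hS' MX hX x Sx hx W (fun p _ => hW p) rp)
    simp only [hΦ, map_sum, LinearMap.comp_apply, LinearEquiv.coe_coe,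
      TensorProduct.assoc_symm_tmul, rTensor_tmul, TensorProduct.comm_tmul,
      TensorProduct.assoc_tmul, TensorProduct.map_tmul, TensorProduct.lift.tmul,
      LinearMap.flip_apply, LinearMap.mulRight_apply] at hkey
    exact hkey
  have h4 : ∀ q ∈ Sy, ∀ l ∈ (rq q).index,
      (∑ p ∈ Sx,
        (MX.mul (MX.act (p.1 * (rq q).left l) v) p.2) ⊗ₜ[K]
          (MY.mul (MY.act ((1:H) * (rq q).right l) u) q.2))
      = (MX.mul x (MX.act ((rq q).left l) v)) ⊗ₜ[K]
          (MY.mul (MY.act ((rq q).right l) u) q.2) := by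
    intro q _ l _
    rw [← hXcol (MX.act ((rq q).left l) v), TensorProduct.sum_tmul]
    refine Finset.sum_congr rfl fun p _ => ?_
    rw [one_mul, hacX]
  have h5 : (∑ q ∈ Sy, ∑ l ∈ (rq q).index,
        (MX.mul x (MX.act ((rq q).left l) v)) ⊗ₜ[K]
          (MY.mul (MY.act ((rq q).right l) u) q.2))
      = ∑ q ∈ Sy, (MX.mul x (MX.act q.1 v)) ⊗ₜ[K] (MY.mul q.2 u) := by
    set Ξ : H ⊗[K] (H ⊗[K] Y) →ₗ[K] X ⊗[K] Y :=
      TensorProduct.map (MX.mul x ∘ₗ (MX.act).flip v)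
        (TensorProduct.lift (MY.mul ∘ₗ (MY.act).flip u)) with hΞ
    have hcy := coassoc_sum MY hY y Sy hy Wy (fun q _ => hWy q) rq
    have hk := congrArg Ξ hcy
    simp only [hΞ, map_sum, TensorProduct.map_tmul, TensorProduct.lift.tmul,
      LinearMap.comp_apply, LinearMap.flip_apply] at hk
    rw [← hk]
    refine Finset.sum_congr rfl fun q _ => ?_
    calc ∑ s ∈ Wy q,
          (MX.mul x (MX.act q.1 v)) ⊗ₜ[K] (MY.mul (MY.act s.1 u) s.2)
        = (MX.mul x (MX.act q.1 v)) ⊗ₜ[K] (∑ s ∈ Wy q, MY.mul (MY.act s.1 u) s.2) :=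
          (TensorProduct.tmul_sum _ _ _).symm
      _ = (MX.mul x (MX.act q.1 v)) ⊗ₜ[K] (MY.mul q.2 u) := by rw [hYcol q]
  rw [h1, hRHS]
  calc ∑ p ∈ Sx, ∑ q ∈ Sy,
          (bp (GData.ofHopf K H) MX MY).mul
            ((bp (GData.ofHopf K H) MX MY).act (p.1 * q.1) (v ⊗ₜ[K] u)) (p.2 ⊗ₜ[K] q.2)
      = ∑ p ∈ Sx, ∑ q ∈ Sy, ∑ k ∈ (rp p).index, ∑ l ∈ (rq q).index, ∑ r ∈ W p,
          (MX.mul (MX.act ((rp p).left k * (rq q).left l) v) r.2) ⊗ₜ[K]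
            (MY.mul (MY.act ((Sinv r.1 * (rp p).right k) * (rq q).right l) u) q.2) :=
        Finset.sum_congr rfl fun p _ => Finset.sum_congr rfl fun q _ => h2 p q
    _ = ∑ q ∈ Sy, ∑ l ∈ (rq q).index, ∑ p ∈ Sx, ∑ k ∈ (rp p).index, ∑ r ∈ W p,
          (MX.mul (MX.act ((rp p).left k * (rq q).left l) v) r.2) ⊗ₜ[K]
            (MY.mul (MY.act ((Sinv r.1 * (rp p).right k) * (rq q).right l) u) q.2) := by
        calc ∑ p ∈ Sx, ∑ q ∈ Sy, ∑ k ∈ (rp p).index, ∑ l ∈ (rq q).index, ∑ r ∈ W p,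
              (MX.mul (MX.act ((rp p).left k * (rq q).left l) v) r.2) ⊗ₜ[K]
                (MY.mul (MY.act ((Sinv r.1 * (rp p).right k) * (rq q).right l) u) q.2)
            = ∑ p ∈ Sx, ∑ q ∈ Sy, ∑ l ∈ (rq q).index, ∑ k ∈ (rp p).index, ∑ r ∈ W p,
              (MX.mul (MX.act ((rp p).left k * (rq q).left l) v) r.2) ⊗ₜ[K]
                (MY.mul (MY.act ((Sinv r.1 * (rp p).right k) * (rq q).right l) u) q.2) :=
              Finset.sum_congr rfl fun p _ => Finset.sum_congr rfl fun q _ => Finset.sum_comm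
          _ = ∑ q ∈ Sy, ∑ p ∈ Sx, ∑ l ∈ (rq q).index, ∑ k ∈ (rp p).index, ∑ r ∈ W p,
              (MX.mul (MX.act ((rp p).left k * (rq q).left l) v) r.2) ⊗ₜ[K]
                (MY.mul (MY.act ((Sinv r.1 * (rp p).right k) * (rq q).right l) u) q.2) :=
              Finset.sum_comm
          _ = ∑ q ∈ Sy, ∑ l ∈ (rq q).index, ∑ p ∈ Sx, ∑ k ∈ (rp p).index, ∑ r ∈ W p,
              (MX.mul (MX.act ((rp p).left k * (rq q).left l) v) r.2) ⊗ₜ[K]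
                (MY.mul (MY.act ((Sinv r.1 * (rp p).right k) * (rq q).right l) u) q.2) :=
              Finset.sum_congr rfl fun q _ => Finset.sum_comm
    _ = ∑ q ∈ Sy, ∑ l ∈ (rq q).index, ∑ p ∈ Sx,
          (MX.mul (MX.act (p.1 * (rq q).left l) v) p.2) ⊗ₜ[K]
            (MY.mul (MY.act ((1:H) * (rq q).right l) u) q.2) :=
        Finset.sum_congr rfl fun q hq => Finset.sum_congr rfl fun l hl => h3 q hq l hl
    _ = ∑ q ∈ Sy, ∑ l ∈ (rq q).index,
          (MX.mul x (MX.act ((rq q).left l) v)) ⊗ₜ[K]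
            (MY.mul (MY.act ((rq q).right l) u) q.2) :=
        Finset.sum_congr rfl fun q hq => Finset.sum_congr rfl fun l hl => h4 q hq l hl
    _ = ∑ q ∈ Sy, (MX.mul x (MX.act q.1 v)) ⊗ₜ[K] (MY.mul q.2 u) := h5


end
end

section
/- Let H be a Hopf algebra with bijective antipode, and let X and Y be braided symmetric left–left Yetter–Drinfeld H-module algebras. Then the map φ: X⋈Y → Y⋈X defined by φ(x⋈y) = (x_{(-1)}▷y) ⋈ x_{(0)} is an isomorphism of Yetter–Drinfeld H-module algebras: it is an algebra map, an H-module map, and satisfies δ(φ(x⋈y)) = (id⊗φ)(δ(x⋈y)). -/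
set_option maxHeartbeats 1000000
set_option synthInstance.maxHeartbeats 400000


open TensorProduct LinearMap

noncomputable section

section HopfLemmas
variable (K : Type u) [Field K] (H : Type v) [Ring H] [HopfAlgebra K H]

local notation "SS" => HopfAlgebra.antipode (R := K) (A := H)
local notation "Δ" => (Coalgebra.comul : H →ₗ[K] H ⊗[K] H)
local notation "ε" => (Coalgebra.counit : H →ₗ[K] K)
local notation "μ" => (LinearMap.mul' K H)

/-- multiplication of the tensor square algebra, as a linear map. -/
def mulT : (H ⊗[K] H) ⊗[K] (H ⊗[K] H) →ₗ[K] H ⊗[K] H :=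
  TensorProduct.map μ μ ∘ₗ (TensorProduct.tensorTensorTensorComm K H H H H).toLinearMap

lemma mulT_tmul (p q : H ⊗[K] H) : mulT K H (p ⊗ₜ[K] q) = p * q := by
  induction p using TensorProduct.induction_on with
  | zero => simp [mulT]
  | tmul a b =>
    induction q using TensorProduct.induction_on with
    | zero => simp [mulT]
    | tmul c d => simp [mulT, Algebra.TensorProduct.tmul_mul_tmul]
    | add s t hs ht => simp_all [mulT, tmul_add, mul_add]
  | add s t hs ht => simp_all [mulT, add_tmul, add_mul]

lemma comul_mul'' (a b : H) :
    Δ (a * b) = mulT K H (Δ a ⊗ₜ[K] Δ b) := by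
  rw [Bialgebra.comul_mul, mulT_tmul]

/-- collapse `a₁ ⊗ a₂ ↦ ε(a₁) • a₂`. -/
def cl1 : H ⊗[K] H →ₗ[K] H :=
  (TensorProduct.lid K H).toLinearMap ∘ₗ (Coalgebra.counit (R := K) (A := H)).rTensor H

/-- collapse `a₁ ⊗ a₂ ↦ ε(a₂) • a₁`. -/
def cl2 : H ⊗[K] H →ₗ[K] H :=
  (TensorProduct.rid K H).toLinearMap ∘ₗ (Coalgebra.counit (R := K) (A := H)).lTensor H

@[simp] lemma cl1_tmul (a b : H) : cl1 K H (a ⊗ₜ[K] b) = ε a • b := by simp [cl1]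
@[simp] lemma cl2_tmul (a b : H) : cl2 K H (a ⊗ₜ[K] b) = ε b • a := by simp [cl2]

lemma cl1_comul (a : H) : cl1 K H (Δ a) = a := by
  rw [cl1]; simp [Coalgebra.rTensor_counit_comul]

lemma cl2_comul (a : H) : cl2 K H (Δ a) = a := by
  rw [cl2]; simp [Coalgebra.lTensor_counit_comul]

/-- `a ⊗ b ↦ S a * b`. -/
def kL : H ⊗[K] H →ₗ[K] H := μ ∘ₗ LinearMap.rTensor H SS
/-- `a ⊗ b ↦ a * S b`. -/
def kR : H ⊗[K] H →ₗ[K] H := μ ∘ₗ LinearMap.lTensor H SS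
/-- `a ⊗ b ↦ S b * S a`. -/
def nu : H ⊗[K] H →ₗ[K] H :=
  μ ∘ₗ (TensorProduct.comm K H H).toLinearMap ∘ₗ TensorProduct.map SS SS

@[simp] lemma kL_tmul (a b : H) : kL K H (a ⊗ₜ[K] b) = SS a * b := by simp [kL]
@[simp] lemma kR_tmul (a b : H) : kR K H (a ⊗ₜ[K] b) = a * SS b := by simp [kR]
@[simp] lemma nu_tmul (a b : H) : nu K H (a ⊗ₜ[K] b) = SS b * SS a := by simp [nu]

lemma kL_comul (a : H) : kL K H (Δ a) = algebraMap K H (ε a) := by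
  simp [kL, HopfAlgebra.mul_antipode_rTensor_comul_apply]

lemma kR_comul (a : H) : kR K H (Δ a) = algebraMap K H (ε a) := by
  simp [kR, HopfAlgebra.mul_antipode_lTensor_comul_apply]

def Gm : (H ⊗[K] H) ⊗[K] (H ⊗[K] H) →ₗ[K] H :=
  μ ∘ₗ TensorProduct.map (kL K H ∘ₗ Δ ∘ₗ μ) (nu K H) ∘ₗ
    (TensorProduct.tensorTensorTensorComm K H H H H).toLinearMap

def Phi : ((H ⊗[K] H) ⊗[K] H) ⊗[K] ((H ⊗[K] H) ⊗[K] H) →ₗ[K] H :=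
  μ ∘ₗ TensorProduct.map (kL K H ∘ₗ mulT K H) (nu K H) ∘ₗ
    (TensorProduct.tensorTensorTensorComm K (H ⊗[K] H) H (H ⊗[K] H) H).toLinearMap

def Phi2 : ((H ⊗[K] H) ⊗[K] H) ⊗[K] (H ⊗[K] (H ⊗[K] H)) →ₗ[K] H :=
  Phi K H ∘ₗ ((TensorProduct.assoc K H H H).symm.toLinearMap).lTensor ((H ⊗[K] H) ⊗[K] H)

def Phi4 : ((H ⊗[K] H) ⊗[K] H) ⊗[K] H →ₗ[K] H :=
  μ ∘ₗ TensorProduct.map (SS ∘ₗ μ) (kR K H) ∘ₗ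
    (TensorProduct.tensorTensorTensorComm K H H H H).toLinearMap ∘ₗ
    ((TensorProduct.comm K H H).toLinearMap).lTensor (H ⊗[K] H) ∘ₗ
    (TensorProduct.assoc K (H ⊗[K] H) H H).toLinearMap

def Phi5 : (H ⊗[K] (H ⊗[K] H)) ⊗[K] H →ₗ[K] H :=
  Phi4 K H ∘ₗ ((TensorProduct.assoc K H H H).symm.toLinearMap).rTensor H

def Phi6 : (H ⊗[K] H) ⊗[K] H →ₗ[K] H :=
  SS ∘ₗ μ ∘ₗ (cl2 K H).rTensor H

lemma L1 (a b : H) : Gm K H (Δ a ⊗ₜ[K] Δ b) = SS b * SS a := by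
  have key : ∀ p q : H ⊗[K] H, Gm K H (p ⊗ₜ[K] q) = nu K H (cl1 K H p ⊗ₜ[K] cl1 K H q) := by
    intro p q
    induction p using TensorProduct.induction_on with
    | zero => simp [Gm]
    | tmul a1 a2 =>
      induction q using TensorProduct.induction_on with
      | zero => simp [Gm]
      | tmul b1 b2 =>
        simp only [Gm, coe_comp, Function.comp_apply, LinearEquiv.coe_coe,
          tensorTensorTensorComm_tmul, map_tmul, mul'_apply]
        rw [kL_comul]
        simp only [cl1_tmul, nu_tmul, mul'_apply, map_smul, smul_tmul', tmul_smul,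
          Algebra.algebraMap_eq_smul_one, smul_mul_assoc, mul_smul_comm, one_mul, smul_smul,
          Bialgebra.counit_mul]
        rw [mul_comm]
      | add s t hs ht => simp_all [tmul_add]
    | add s t hs ht => simp_all [add_tmul]
  rw [key, cl1_comul, cl1_comul]
  simp

lemma L2 (a b : H) :
    Gm K H (Δ a ⊗ₜ[K] Δ b)
      = Phi K H ((LinearMap.rTensor H Δ) (Δ a) ⊗ₜ[K] (LinearMap.rTensor H Δ) (Δ b)) := by
  have key : ∀ p q : H ⊗[K] H,
      Gm K H (p ⊗ₜ[K] q)
        = Phi K H ((LinearMap.rTensor H Δ) p ⊗ₜ[K] (LinearMap.rTensor H Δ) q) := by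
    intro p q
    induction p using TensorProduct.induction_on with
    | zero => simp [Gm]
    | tmul a1 a2 =>
      induction q using TensorProduct.induction_on with
      | zero => simp [Gm]
      | tmul b1 b2 =>
        simp only [Gm, coe_comp, Function.comp_apply, LinearEquiv.coe_coe,
          tensorTensorTensorComm_tmul, map_tmul, mul'_apply, rTensor_tmul]
        rw [comul_mul'' K H a1 b1]
        generalize Δ a1 = t
        generalize Δ b1 = u
        induction t using TensorProduct.induction_on with
        | zero => simp [Phi]
        | tmul c d =>
          induction u using TensorProduct.induction_on with
          | zero => simp [Phi]
          | tmul e f =>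
            simp [Phi, mulT_tmul, Algebra.TensorProduct.tmul_mul_tmul]
          | add s t hs ht => simp_all [Phi, tmul_add, add_tmul, mul_add, add_mul]
        | add s t hs ht => simp_all [Phi, add_tmul, add_mul, mul_add]
      | add s t hs ht => simp_all [tmul_add]
    | add s t hs ht => simp_all [add_tmul]
  exact key _ _

lemma L3 (a b : H) :
    Phi K H ((LinearMap.rTensor H Δ) (Δ a) ⊗ₜ[K] (LinearMap.rTensor H Δ) (Δ b))
      = Phi2 K H ((LinearMap.rTensor H Δ) (Δ a) ⊗ₜ[K] (LinearMap.lTensor H Δ) (Δ b)) := by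
  simp only [Phi2, coe_comp, Function.comp_apply, lTensor_tmul]
  congr 1
  rw [← Coalgebra.coassoc_apply b]
  simp

lemma L4 (a b : H) :
    Phi2 K H ((LinearMap.rTensor H Δ) (Δ a) ⊗ₜ[K] (LinearMap.lTensor H Δ) (Δ b))
      = Phi4 K H ((LinearMap.rTensor H Δ) (Δ a) ⊗ₜ[K] b) := by
  have key : ∀ (p : (H ⊗[K] H) ⊗[K] H) (q : H ⊗[K] H),
      Phi2 K H (p ⊗ₜ[K] (LinearMap.lTensor H Δ) q)
        = Phi4 K H (p ⊗ₜ[K] cl2 K H q) := by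
    intro p q
    induction p using TensorProduct.induction_on with
    | zero => simp [Phi2, Phi4]
    | tmul r a3 =>
      induction r using TensorProduct.induction_on with
      | zero => simp [Phi2, Phi4]
      | tmul a1 a2 =>
        induction q using TensorProduct.induction_on with
        | zero => simp [Phi2, Phi4]
        | tmul b1 b2 =>
          simp only [lTensor_tmul, cl2_tmul]
          have inner : ∀ t : H ⊗[K] H,
              Phi2 K H (((a1 ⊗ₜ[K] a2) ⊗ₜ[K] a3) ⊗ₜ[K] (b1 ⊗ₜ[K] t))
                = SS (a1 * b1) * (a2 * kR K H t * SS a3) := by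
            intro t
            induction t using TensorProduct.induction_on with
            | zero => simp [Phi2, Phi]
            | tmul p1 q1 =>
              simp [Phi2, Phi, mulT_tmul, Algebra.TensorProduct.tmul_mul_tmul, mul_assoc]
            | add s t hs ht => simp_all [Phi2, Phi, tmul_add, mul_add, add_mul]
          rw [inner (Δ b2), kR_comul]
          simp only [Phi4, coe_comp, Function.comp_apply, LinearEquiv.coe_coe, map_smul,
            assoc_tmul, lTensor_tmul, comm_tmul, tensorTensorTensorComm_tmul, map_tmul,
            mul'_apply, kR_tmul, tmul_smul]
          simp [Algebra.algebraMap_eq_smul_one, mul_smul_comm, smul_mul_assoc, mul_assoc]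
        | add s t hs ht => simp_all [tmul_add]
      | add s t hs ht => simp_all [add_tmul]
    | add s t hs ht => simp_all [add_tmul]
  rw [key, cl2_comul]

lemma L5 (a b : H) :
    Phi4 K H ((LinearMap.rTensor H Δ) (Δ a) ⊗ₜ[K] b)
      = Phi5 K H ((LinearMap.lTensor H Δ) (Δ a) ⊗ₜ[K] b) := by
  simp only [Phi5, coe_comp, Function.comp_apply, rTensor_tmul]
  congr 2
  rw [← Coalgebra.coassoc_apply a]
  simp

lemma L6 (a b : H) :
    Phi5 K H ((LinearMap.lTensor H Δ) (Δ a) ⊗ₜ[K] b)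
      = Phi6 K H (Δ a ⊗ₜ[K] b) := by
  have key : ∀ (p : H ⊗[K] H) (b : H),
      Phi5 K H ((LinearMap.lTensor H Δ) p ⊗ₜ[K] b) = Phi6 K H (p ⊗ₜ[K] b) := by
    intro p b
    induction p using TensorProduct.induction_on with
    | zero => simp [Phi5, Phi6, Phi4]
    | tmul a1 a2 =>
      simp only [lTensor_tmul]
      have inner : ∀ t : H ⊗[K] H,
          Phi5 K H ((a1 ⊗ₜ[K] t) ⊗ₜ[K] b) = SS (a1 * b) * kR K H t := by
        intro t
        induction t using TensorProduct.induction_on with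
        | zero => simp [Phi5, Phi4]
        | tmul p1 q1 => simp [Phi5, Phi4]
        | add s t hs ht => simp_all [Phi5, Phi4, tmul_add, add_tmul, mul_add]
      rw [inner (Δ a2), kR_comul]
      simp [Phi6, Algebra.algebraMap_eq_smul_one, mul_smul_comm]
    | add s t hs ht => simp_all [add_tmul]
  exact key _ _

lemma L7 (a b : H) : Phi6 K H (Δ a ⊗ₜ[K] b) = SS (a * b) := by
  simp only [Phi6, coe_comp, Function.comp_apply, rTensor_tmul, cl2_comul, mul'_apply]

theorem S_anti (a b : H) : SS (a * b) = SS b * SS a := by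
  rw [← L7 K H a b, ← L6 K H a b, ← L5 K H a b, ← L4 K H a b, ← L3 K H a b, ← L2 K H a b,
    L1 K H a b]

theorem S_one : SS (1 : H) = 1 := by
  have := HopfAlgebra.mul_antipode_rTensor_comul_apply (R := K) (a := (1 : H))
  simpa [Algebra.TensorProduct.one_def] using this

variable {K H}

/-- `h₁ ⊗ h₂ ↦ h₂ * Sinv h₁`. -/
def copA_map (Sinv : H →ₗ[K] H) : H ⊗[K] H →ₗ[K] H :=
  μ ∘ₗ (TensorProduct.comm K H H).toLinearMap ∘ₗ LinearMap.rTensor H Sinv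

/-- `h₁ ⊗ h₂ ↦ Sinv h₂ * h₁`. -/
def copB_map (Sinv : H →ₗ[K] H) : H ⊗[K] H →ₗ[K] H :=
  μ ∘ₗ (TensorProduct.comm K H H).toLinearMap ∘ₗ LinearMap.lTensor H Sinv

@[simp] lemma copA_map_tmul (Sinv : H →ₗ[K] H) (a b : H) :
    copA_map Sinv (a ⊗ₜ[K] b) = b * Sinv a := by simp [copA_map]
@[simp] lemma copB_map_tmul (Sinv : H →ₗ[K] H) (a b : H) :
    copB_map Sinv (a ⊗ₜ[K] b) = Sinv b * a := by simp [copB_map]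

theorem copA_comp (Sinv : H →ₗ[K] H)
    (hS : Sinv ∘ₗ SS = LinearMap.id) (hS' : SS ∘ₗ Sinv = LinearMap.id) :
    copA_map Sinv ∘ₗ Δ = Algebra.linearMap K H ∘ₗ ε := by
  have hinj : Function.Injective SS :=
    Function.LeftInverse.injective (g := Sinv) (fun x => LinearMap.congr_fun hS x)
  have key : ∀ t : H ⊗[K] H, SS (copA_map Sinv t) = μ (LinearMap.lTensor H SS t) := by
    intro t
    induction t using TensorProduct.induction_on with
    | zero => simp
    | tmul a b =>
      simp only [copA_map_tmul, lTensor_tmul, mul'_apply]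
      rw [S_anti]
      congr 1
      exact LinearMap.congr_fun hS' a
    | add s t hs ht => simp_all
  apply LinearMap.ext; intro h
  apply hinj
  simp only [coe_comp, Function.comp_apply]
  rw [key (Δ h), HopfAlgebra.mul_antipode_lTensor_comul_apply]
  simp [Algebra.algebraMap_eq_smul_one, S_one]

theorem copB_comp (Sinv : H →ₗ[K] H)
    (hS : Sinv ∘ₗ SS = LinearMap.id) (hS' : SS ∘ₗ Sinv = LinearMap.id) :
    copB_map Sinv ∘ₗ Δ = Algebra.linearMap K H ∘ₗ ε := by
  have hinj : Function.Injective SS :=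
    Function.LeftInverse.injective (g := Sinv) (fun x => LinearMap.congr_fun hS x)
  have key : ∀ t : H ⊗[K] H, SS (copB_map Sinv t) = μ (LinearMap.rTensor H SS t) := by
    intro t
    induction t using TensorProduct.induction_on with
    | zero => simp
    | tmul a b =>
      simp only [copB_map_tmul, rTensor_tmul, mul'_apply]
      rw [S_anti]
      congr 1
      exact LinearMap.congr_fun hS' b
    | add s t hs ht => simp_all
  apply LinearMap.ext; intro h
  apply hinj
  simp only [coe_comp, Function.comp_apply]
  rw [key (Δ h), HopfAlgebra.mul_antipode_rTensor_comul_apply]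
  simp [Algebra.algebraMap_eq_smul_one, S_one]

theorem copA2 (Sinv : H →ₗ[K] H)
    (hS : Sinv ∘ₗ SS = LinearMap.id) (hS' : SS ∘ₗ Sinv = LinearMap.id) (h : H) :
    (LinearMap.rTensor H (copA_map Sinv)) ((LinearMap.rTensor H Δ) (Δ h))
      = (1 : H) ⊗ₜ[K] h := by
  rw [← LinearMap.comp_apply, ← LinearMap.rTensor_comp, copA_comp Sinv hS hS',
    LinearMap.rTensor_comp, LinearMap.comp_apply, Coalgebra.rTensor_counit_comul]
  simp

end HopfLemmas

section EvalLemmas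

variable {K : Type*} [Field K]
variable {A : Type*} [AddCommGroup A] [Module K A]
variable {X : Type*} [AddCommGroup X] [Module K X]
variable {Y : Type*} [AddCommGroup Y] [Module K Y]

theorem braid_tmul (coactY : Y →ₗ[K] A ⊗[K] Y) (actX : A →ₗ[K] X →ₗ[K] X)
    (y : Y) (x : X) :
    braidMap coactY actX (y ⊗ₜ[K] x) = (rTensor Y (actX.flip x)) (coactY y) := by
  rw [braidMap]
  simp only [coe_comp, Function.comp_apply, rTensor_tmul, LinearEquiv.coe_coe]
  generalize coactY y = t
  induction t using TensorProduct.induction_on with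
  | zero => simp
  | tmul a b => simp
  | add s t hs ht => simp only [map_add, add_tmul, hs, ht]

theorem braidInv_tmul (coactX : X →ₗ[K] A ⊗[K] X) (actY : A →ₗ[K] Y →ₗ[K] Y)
    (Sinv : A →ₗ[K] A) (y : Y) (x : X) :
    braidInvMap coactX actY Sinv (y ⊗ₜ[K] x)
      = (lTensor X (actY.flip y ∘ₗ Sinv)) ((TensorProduct.comm K A X) (coactX x)) := by
  rw [braidInvMap]
  simp only [coe_comp, Function.comp_apply, LinearEquiv.coe_coe, comm_tmul, rTensor_tmul]
  generalize coactX x = t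
  induction t using TensorProduct.induction_on with
  | zero => simp
  | tmul a b => simp
  | add s t hs ht => simp only [map_add, add_tmul, hs, ht]

theorem bp_mul_tmul_s10 (G : GData K A) (MX : XData K A X) (MY : XData K A Y)
    (x v : X) (y u : Y) :
    (bp G MX MY).mul (x ⊗ₜ[K] y) (v ⊗ₜ[K] u)
      = (rTensor Y (MX.mul x))
          ((lTensor X (MY.mul.flip u)) (braidMap MY.coact MX.act (y ⊗ₜ[K] v))) := by
  rw [braid_tmul]
  simp only [bp, TensorProduct.lift.tmul, coe_comp, Function.comp_apply, compl₂_apply,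
    llcomp_apply, coe_rTensorHom]
  generalize MY.coact y = t
  induction t using TensorProduct.induction_on with
  | zero => simp
  | tmul a b =>
    simp [TensorProduct.mapBilinear_apply, XData.mulU, XData.actU]
  | add s t hs ht => simp_all [add_tmul]

end EvalLemmas




section MainHelpers

variable {K : Type*} [Field K]
variable {H : Type*} [Ring H] [HopfAlgebra K H]
variable {X : Type*} [AddCommGroup X] [Module K X]
variable {Y : Type*} [AddCommGroup Y] [Module K Y]

@[simp] lemma ofHopf_mul : (GData.ofHopf K H).mul = LinearMap.mul K H := rfl
@[simp] lemma ofHopf_one : (GData.ofHopf K H).one = 1 := rfl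
@[simp] lemma ofHopf_comul :
    (GData.ofHopf K H).comul = (Coalgebra.comul : H →ₗ[K] H ⊗[K] H) := rfl
@[simp] lemma ofHopf_counit :
    (GData.ofHopf K H).counit = (Coalgebra.counit : H →ₗ[K] K) := rfl
@[simp] lemma lift_mul_eq :
    TensorProduct.lift (LinearMap.mul K H) = LinearMap.mul' K H := rfl

theorem part2 (MX : XData K H X) (MY : XData K H Y)
    (hX : IsYDMA (GData.ofHopf K H) MX) (hY : IsYDMA (GData.ofHopf K H) MY) :
    braidMap MX.coact MY.act ((bp (GData.ofHopf K H) MX MY).one)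
      = (bp (GData.ofHopf K H) MY MX).one := by
  have h1 : (bp (GData.ofHopf K H) MX MY).one = MX.one ⊗ₜ[K] MY.one := rfl
  rw [h1, braid_tmul, hX.coact_one]
  simp only [rTensor_tmul, flip_apply, ofHopf_one]
  rw [show MY.act (1 : H) MY.one = MY.one from by
    rw [show (1 : H) = (GData.ofHopf K H).one from rfl, hY.act_one]; rfl]
  rfl

theorem part3A (MX : XData K H X) (MY : XData K H Y)
    (hY : IsYDMA (GData.ofHopf K H) MY) (h : H) (x : X) (y : Y) :
    braidMap MX.coact MY.act ((bp (GData.ofHopf K H) MX MY).act h (x ⊗ₜ[K] y))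
      = (rTensor X (MY.act.flip y)) (ydL (GData.ofHopf K H) MX (h ⊗ₜ[K] x)) := by
  simp only [bp, ydL, coe_comp, Function.comp_apply, LinearEquiv.coe_coe,
    rTensor_tmul, ofHopf_comul]
  generalize (Coalgebra.comul (R := K) h) = t
  induction t using TensorProduct.induction_on with
  | zero => simp
  | tmul a b =>
    simp only [TensorProduct.lift.tmul, coe_comp, Function.comp_apply, compl₂_apply,
      TensorProduct.mapBilinear_apply, TensorProduct.map_tmul, assoc_tmul, lTensor_tmul,
      comm_tmul, assoc_symm_tmul, rTensor_tmul, XData.actU, LinearEquiv.coe_coe]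
    rw [braid_tmul]
    generalize MX.coact (MX.act a x) = u
    induction u using TensorProduct.induction_on with
    | zero => simp
    | tmul c x' =>
      simp only [rTensor_tmul, flip_apply, assoc_tmul, lTensor_tmul, comm_tmul,
        assoc_symm_tmul, TensorProduct.lift.tmul, LinearEquiv.coe_coe, ofHopf_mul,
        lift_mul_eq, mul'_apply]
      have := LinearMap.congr_fun (hY.act_mul c b) y
      simp only [ofHopf_mul, coe_comp, Function.comp_apply, LinearMap.mul_apply'] at this
      rw [this]
    | add s t hs ht => simp only [map_add, add_tmul, hs, ht]
  | add s t hs ht =>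
    simp only [map_add, add_tmul, LinearMap.add_apply, hs, ht]

theorem part3B (MX : XData K H X) (MY : XData K H Y)
    (hY : IsYDMA (GData.ofHopf K H) MY) (h : H) (x : X) (y : Y) :
    (bp (GData.ofHopf K H) MY MX).act h (braidMap MX.coact MY.act (x ⊗ₜ[K] y))
      = (rTensor X (MY.act.flip y)) (ydR (GData.ofHopf K H) MX (h ⊗ₜ[K] x)) := by
  rw [braid_tmul]
  simp only [bp, ydR, coe_comp, Function.comp_apply, LinearEquiv.coe_coe,
    TensorProduct.map_tmul, ofHopf_comul]
  generalize (Coalgebra.comul (R := K) h) = t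
  generalize MX.coact x = u
  induction t using TensorProduct.induction_on with
  | zero => simp
  | tmul a b =>
    induction u using TensorProduct.induction_on with
    | zero => simp
    | tmul c x' =>
      simp only [rTensor_tmul, flip_apply, TensorProduct.lift.tmul, coe_comp,
        Function.comp_apply, compl₂_apply, TensorProduct.mapBilinear_apply,
        TensorProduct.map_tmul, tensorTensorTensorComm_tmul, XData.actU, mul'_apply,
        lift_mul_eq, LinearEquiv.coe_coe, ofHopf_mul]
      have := LinearMap.congr_fun (hY.act_mul a c) y
      simp only [ofHopf_mul, coe_comp, Function.comp_apply, LinearMap.mul_apply'] at this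
      rw [this]
    | add s t hs ht => simp only [map_add, add_tmul, tmul_add, hs, ht]
  | add s t hs ht => simp only [map_add, add_tmul, LinearMap.add_apply, hs, ht]

theorem part3 (MX : XData K H X) (MY : XData K H Y)
    (hX : IsYDMA (GData.ofHopf K H) MX) (hY : IsYDMA (GData.ofHopf K H) MY) (h : H) :
    (braidMap MX.coact MY.act) ∘ₗ ((bp (GData.ofHopf K H) MX MY).act h)
      = ((bp (GData.ofHopf K H) MY MX).act h) ∘ₗ (braidMap MX.coact MY.act) := by
  apply TensorProduct.ext'
  intro x y
  simp only [coe_comp, Function.comp_apply]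
  rw [part3A MX MY hY h x y, part3B MX MY hY h x y, hX.yd]

/-- second half of a braiding: `(b ⊗ x) ⊗ z ↦ (b ▷ z) ⊗ x`. -/
def btail (actY : H →ₗ[K] Y →ₗ[K] Y) : (H ⊗[K] X) ⊗[K] Y →ₗ[K] Y ⊗[K] X :=
  rTensor X (TensorProduct.lift actY) ∘ₗ (TensorProduct.assoc K H Y X).symm.toLinearMap ∘ₗ
  lTensor H (TensorProduct.comm K X Y).toLinearMap ∘ₗ (TensorProduct.assoc K H X Y).toLinearMap

@[simp] lemma btail_tmul (actY : H →ₗ[K] Y →ₗ[K] Y) (b : H) (x : X) (z : Y) :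
    btail actY ((b ⊗ₜ[K] x) ⊗ₜ[K] z) = actY b z ⊗ₜ[K] x := by
  simp [btail]

/-- `a ⊗ (b ⊗ x) ↦ ((a ▷ y)₍₋₁₎ * b) ⊗ ((a ▷ y)₍₀₎ ⊗ x)`. -/
def A2 (MY : XData K H Y) (y : Y) : H ⊗[K] (H ⊗[K] X) →ₗ[K] H ⊗[K] (Y ⊗[K] X) :=
  rTensor (Y ⊗[K] X) (LinearMap.mul' K H) ∘ₗ
  (TensorProduct.tensorTensorTensorComm K H Y H X).toLinearMap ∘ₗ
  rTensor (H ⊗[K] X) (MY.coact ∘ₗ MY.act.flip y)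

def B1 (MX : XData K H X) (MY : XData K H Y) :
    (H ⊗[K] (H ⊗[K] X)) ⊗[K] (H ⊗[K] Y) →ₗ[K] H ⊗[K] (Y ⊗[K] X) :=
  rTensor (Y ⊗[K] X) (LinearMap.mul' K H) ∘ₗ
  lTensor (H ⊗[K] H) (btail MY.act) ∘ₗ
  (TensorProduct.tensorTensorTensorComm K H (H ⊗[K] X) H Y).toLinearMap

theorem part4L1 (MX : XData K H X) (MY : XData K H Y) (y : Y) (t : H ⊗[K] X) :
    (bp (GData.ofHopf K H) MY MX).coact ((rTensor X (MY.act.flip y)) t)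
      = A2 (X := X) MY y ((lTensor H MX.coact) t) := by
  induction t using TensorProduct.induction_on with
  | zero => simp
  | tmul a x' =>
    simp only [rTensor_tmul, lTensor_tmul, flip_apply, bp, A2, coe_comp,
      Function.comp_apply, LinearEquiv.coe_coe, TensorProduct.map_tmul, ofHopf_mul,
      lift_mul_eq]
  | add s t hs ht => simp only [map_add, hs, ht]

theorem part4L2 (MX : XData K H X) (MY : XData K H Y) (y : Y) (t : H ⊗[K] X) :
    A2 (X := X) MY y ((TensorProduct.assoc K H H X)
        ((rTensor X (Coalgebra.comul (R := K))) t))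
      = (TensorProduct.assoc K H Y X)
          ((rTensor X (ydL (GData.ofHopf K H) MY ∘ₗ (TensorProduct.mk K H Y).flip y)) t) := by
  induction t using TensorProduct.induction_on with
  | zero => simp
  | tmul a x' =>
    simp only [rTensor_tmul, coe_comp, Function.comp_apply, flip_apply,
      TensorProduct.mk_apply, ydL, LinearEquiv.coe_coe, ofHopf_comul, ofHopf_mul, lift_mul_eq]
    generalize (Coalgebra.comul (R := K) a) = t2
    induction t2 using TensorProduct.induction_on with
    | zero => simp [A2]
    | tmul a1 a2 =>
      simp only [assoc_tmul, lTensor_tmul, comm_tmul, assoc_symm_tmul, rTensor_tmul,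
        coe_comp, Function.comp_apply, XData.actU, TensorProduct.lift.tmul,
        LinearEquiv.coe_coe, A2, flip_apply]
      generalize MY.coact (MY.act a1 y) = u
      induction u using TensorProduct.induction_on with
      | zero => simp
      | tmul c y' => simp
      | add s t hs ht => simp only [map_add, add_tmul, hs, ht]
    | add s t hs ht => simp only [map_add, add_tmul, LinearMap.add_apply, hs, ht]
  | add s t hs ht => simp only [map_add, hs, ht]

theorem part4R1 (MX : XData K H X) (MY : XData K H Y) (t : H ⊗[K] X) (s : H ⊗[K] Y) :
    (lTensor H (braidMap MX.coact MY.act))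
        ((rTensor (X ⊗[K] Y) (LinearMap.mul' K H))
          ((TensorProduct.tensorTensorTensorComm K H X H Y).toLinearMap (t ⊗ₜ[K] s)))
      = B1 MX MY ((lTensor H MX.coact) t ⊗ₜ[K] s) := by
  induction t using TensorProduct.induction_on with
  | zero => simp
  | tmul a x' =>
    induction s using TensorProduct.induction_on with
    | zero => simp
    | tmul h y' =>
      simp only [lTensor_tmul, rTensor_tmul, LinearEquiv.coe_coe,
        tensorTensorTensorComm_tmul, mul'_apply, B1, coe_comp, Function.comp_apply]
      rw [braid_tmul]
      generalize MX.coact x' = r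
      induction r using TensorProduct.induction_on with
      | zero => simp
      | tmul b x'' => simp
      | add s t hs ht => simp only [map_add, add_tmul, tmul_add, hs, ht]
    | add s t hs ht => simp only [map_add, tmul_add, hs, ht]
  | add s t hs ht => simp only [map_add, add_tmul, hs, ht]

theorem part4R2 (MX : XData K H X) (MY : XData K H Y) (y : Y) (t : H ⊗[K] X) :
    B1 MX MY ((TensorProduct.assoc K H H X) ((rTensor X (Coalgebra.comul (R := K))) t)
        ⊗ₜ[K] (MY.coact y))
      = (TensorProduct.assoc K H Y X)
          ((rTensor X (ydR (GData.ofHopf K H) MY ∘ₗ (TensorProduct.mk K H Y).flip y)) t) := by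
  induction t using TensorProduct.induction_on with
  | zero => simp
  | tmul a x' =>
    simp only [rTensor_tmul, coe_comp, Function.comp_apply, flip_apply,
      TensorProduct.mk_apply, ydR, LinearEquiv.coe_coe, TensorProduct.map_tmul,
      ofHopf_comul, ofHopf_mul, lift_mul_eq]
    generalize (Coalgebra.comul (R := K) a) = t2
    generalize MY.coact y = s
    induction t2 using TensorProduct.induction_on with
    | zero => simp [B1]
    | tmul a1 a2 =>
      induction s using TensorProduct.induction_on with
      | zero => simp [B1]
      | tmul h y0 =>
        simp [B1, XData.actU]
      | add s t hs ht => simp only [map_add, tmul_add, add_tmul, hs, ht]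
    | add s t hs ht => simp only [map_add, add_tmul, LinearMap.add_apply, hs, ht]
  | add s t hs ht => simp only [map_add, add_tmul, hs, ht]

theorem part4 (MX : XData K H X) (MY : XData K H Y)
    (hX : IsYDMA (GData.ofHopf K H) MX) (hY : IsYDMA (GData.ofHopf K H) MY) :
    ((bp (GData.ofHopf K H) MY MX).coact ∘ₗ (braidMap MX.coact MY.act)
      = (lTensor H (braidMap MX.coact MY.act)) ∘ₗ (bp (GData.ofHopf K H) MX MY).coact) := by
  apply TensorProduct.ext'
  intro x y
  have hco : (TensorProduct.assoc K H H X) ((rTensor X (Coalgebra.comul (R := K))) (MX.coact x))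
      = (lTensor H MX.coact) (MX.coact x) := by
    have := LinearMap.congr_fun hX.coassoc x
    simpa using this
  simp only [coe_comp, Function.comp_apply]
  rw [braid_tmul, part4L1 MX MY y (MX.coact x), ← hco, part4L2 MX MY y (MX.coact x), hY.yd,
    ← part4R2 MX MY y (MX.coact x), hco]
  rw [← part4R1 MX MY (MX.coact x) (MY.coact y)]
  simp only [bp, coe_comp, Function.comp_apply, LinearEquiv.coe_coe, TensorProduct.map_tmul,
    ofHopf_mul, lift_mul_eq]

/-- `a ⊗ b ↦ Sinv b ▷ (a ▷ y)`. -/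
def zetaL (MY : XData K H Y) (Sinv : H →ₗ[K] H) (y : Y) : H ⊗[K] H →ₗ[K] Y :=
  TensorProduct.lift MY.act ∘ₗ lTensor H (MY.act.flip y) ∘ₗ rTensor H Sinv ∘ₗ
    (TensorProduct.comm K H H).toLinearMap

@[simp] lemma zetaL_tmul (MY : XData K H Y) (Sinv : H →ₗ[K] H) (y : Y) (a b : H) :
    zetaL MY Sinv y (a ⊗ₜ[K] b) = MY.act (Sinv b) (MY.act a y) := by simp [zetaL]

/-- `a ⊗ b ↦ b ▷ (Sinv a ▷ y)`. -/
def zetaR (MY : XData K H Y) (Sinv : H →ₗ[K] H) (y : Y) : H ⊗[K] H →ₗ[K] Y :=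
  TensorProduct.lift MY.act ∘ₗ (TensorProduct.comm K Y H).toLinearMap ∘ₗ
    rTensor H (MY.act.flip y ∘ₗ Sinv)

@[simp] lemma zetaR_tmul (MY : XData K H Y) (Sinv : H →ₗ[K] H) (y : Y) (a b : H) :
    zetaR MY Sinv y (a ⊗ₜ[K] b) = MY.act b (MY.act (Sinv a) y) := by simp [zetaR]

def DL (MY : XData K H Y) (Sinv : H →ₗ[K] H) (y : Y) :
    H ⊗[K] (H ⊗[K] X) →ₗ[K] X ⊗[K] Y :=
  lTensor X (zetaL MY Sinv y) ∘ₗ (TensorProduct.comm K (H ⊗[K] H) X).toLinearMap ∘ₗ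
    (TensorProduct.assoc K H H X).symm.toLinearMap

def DR (MY : XData K H Y) (Sinv : H →ₗ[K] H) (y : Y) :
    H ⊗[K] (H ⊗[K] X) →ₗ[K] Y ⊗[K] X :=
  rTensor X (zetaR MY Sinv y) ∘ₗ (TensorProduct.assoc K H H X).symm.toLinearMap

theorem part5L1 (MX : XData K H X) (MY : XData K H Y) (Sinv : H →ₗ[K] H) (y : Y)
    (t : H ⊗[K] X) :
    braidInvMap MX.coact MY.act Sinv ((rTensor X (MY.act.flip y)) t)
      = DL (X := X) MY Sinv y ((lTensor H MX.coact) t) := by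
  induction t using TensorProduct.induction_on with
  | zero => simp
  | tmul a x' =>
    simp only [rTensor_tmul, lTensor_tmul, flip_apply]
    rw [braidInv_tmul]
    generalize MX.coact x' = r
    induction r using TensorProduct.induction_on with
    | zero => simp [DL]
    | tmul b x'' => simp [DL]
    | add s t hs ht => simp only [map_add, tmul_add, hs, ht]
  | add s t hs ht => simp only [map_add, hs, ht]

theorem part5L2 (MX : XData K H X) (MY : XData K H Y)
    (hY : IsYDMA (GData.ofHopf K H) MY) (Sinv : H →ₗ[K] H) (y : Y) (t : H ⊗[K] X) :
    DL (X := X) MY Sinv y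
        ((TensorProduct.assoc K H H X) ((rTensor X (Coalgebra.comul (R := K))) t))
      = (lTensor X (MY.act.flip y ∘ₗ (copB_map Sinv ∘ₗ Coalgebra.comul)))
          ((TensorProduct.comm K H X) t) := by
  induction t using TensorProduct.induction_on with
  | zero => simp
  | tmul a x' =>
    simp only [rTensor_tmul, comm_tmul, lTensor_tmul, coe_comp, Function.comp_apply,
      LinearEquiv.coe_coe]
    generalize (Coalgebra.comul (R := K) a) = t2
    induction t2 using TensorProduct.induction_on with
    | zero => simp [DL]
    | tmul a1 a2 =>
      simp only [assoc_tmul, DL, coe_comp, Function.comp_apply, LinearEquiv.coe_coe,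
        assoc_symm_tmul, comm_tmul, lTensor_tmul, zetaL_tmul, copB_map_tmul, flip_apply]
      have := LinearMap.congr_fun (hY.act_mul (Sinv a2) a1) y
      simp only [ofHopf_mul, coe_comp, Function.comp_apply, LinearMap.mul_apply'] at this
      rw [this]
    | add s t hs ht => simp only [map_add, add_tmul, tmul_add, hs, ht]
  | add s t hs ht => simp only [map_add, hs, ht]

theorem part5L3 (MY : XData K H Y) (hY : IsYDMA (GData.ofHopf K H) MY) (y : Y)
    (t : H ⊗[K] X) :
    (lTensor X (MY.act.flip y ∘ₗ (Algebra.linearMap K H ∘ₗ Coalgebra.counit)))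
        ((TensorProduct.comm K H X) t)
      = (TensorProduct.lid K X) ((rTensor X (Coalgebra.counit (R := K))) t) ⊗ₜ[K] y := by
  have h1 : MY.act (1 : H) y = y := by
    rw [show (1 : H) = (GData.ofHopf K H).one from rfl, hY.act_one]; rfl
  induction t using TensorProduct.induction_on with
  | zero => simp
  | tmul a x' =>
    simp only [comm_tmul, lTensor_tmul, coe_comp, Function.comp_apply, flip_apply,
      Algebra.linearMap_apply, rTensor_tmul, lid_tmul, Algebra.algebraMap_eq_smul_one,
      map_smul, h1, smul_tmul', smul_tmul]
  | add s t hs ht => simp only [map_add, tmul_add, add_tmul, hs, ht]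

theorem part5R1 (MX : XData K H X) (MY : XData K H Y) (Sinv : H →ₗ[K] H) (y : Y)
    (t : H ⊗[K] X) :
    braidMap MX.coact MY.act
        ((lTensor X (MY.act.flip y ∘ₗ Sinv)) ((TensorProduct.comm K H X) t))
      = DR (X := X) MY Sinv y ((lTensor H MX.coact) t) := by
  induction t using TensorProduct.induction_on with
  | zero => simp
  | tmul a x' =>
    simp only [comm_tmul, lTensor_tmul, coe_comp, Function.comp_apply, flip_apply]
    rw [braid_tmul]
    generalize MX.coact x' = r
    induction r using TensorProduct.induction_on with
    | zero => simp [DR]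
    | tmul b x'' => simp [DR]
    | add s t hs ht => simp only [map_add, add_tmul, tmul_add, hs, ht]
  | add s t hs ht => simp only [map_add, hs, ht]

theorem part5R2 (MX : XData K H X) (MY : XData K H Y)
    (hY : IsYDMA (GData.ofHopf K H) MY) (Sinv : H →ₗ[K] H) (y : Y) (t : H ⊗[K] X) :
    DR (X := X) MY Sinv y
        ((TensorProduct.assoc K H H X) ((rTensor X (Coalgebra.comul (R := K))) t))
      = (rTensor X (MY.act.flip y ∘ₗ (copA_map Sinv ∘ₗ Coalgebra.comul))) t := by
  induction t using TensorProduct.induction_on with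
  | zero => simp
  | tmul a x' =>
    simp only [rTensor_tmul, coe_comp, Function.comp_apply]
    generalize (Coalgebra.comul (R := K) a) = t2
    induction t2 using TensorProduct.induction_on with
    | zero => simp [DR]
    | tmul a1 a2 =>
      simp only [assoc_tmul, DR, coe_comp, Function.comp_apply, LinearEquiv.coe_coe,
        assoc_symm_tmul, rTensor_tmul, zetaR_tmul, copA_map_tmul, flip_apply]
      have := LinearMap.congr_fun (hY.act_mul a2 (Sinv a1)) y
      simp only [ofHopf_mul, coe_comp, Function.comp_apply, LinearMap.mul_apply'] at this
      rw [this]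
    | add s t hs ht => simp only [map_add, add_tmul, hs, ht]
  | add s t hs ht => simp only [map_add, hs, ht]

theorem part5R3 (MY : XData K H Y) (hY : IsYDMA (GData.ofHopf K H) MY) (y : Y)
    (t : H ⊗[K] X) :
    (rTensor X (MY.act.flip y ∘ₗ (Algebra.linearMap K H ∘ₗ Coalgebra.counit))) t
      = y ⊗ₜ[K] (TensorProduct.lid K X) ((rTensor X (Coalgebra.counit (R := K))) t) := by
  have h1 : MY.act (1 : H) y = y := by
    rw [show (1 : H) = (GData.ofHopf K H).one from rfl, hY.act_one]; rfl
  induction t using TensorProduct.induction_on with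
  | zero => simp
  | tmul a x' =>
    simp only [rTensor_tmul, coe_comp, Function.comp_apply, flip_apply,
      Algebra.linearMap_apply, lid_tmul, Algebra.algebraMap_eq_smul_one, map_smul, h1,
      smul_tmul', smul_tmul]
  | add s t hs ht => simp only [map_add, tmul_add, add_tmul, hs, ht]

theorem part5 (Sinv : H →ₗ[K] H)
    (hS : Sinv ∘ₗ HopfAlgebra.antipode (R := K) = LinearMap.id)
    (hS' : HopfAlgebra.antipode (R := K) ∘ₗ Sinv = LinearMap.id)
    (MX : XData K H X) (MY : XData K H Y)
    (hX : IsYDMA (GData.ofHopf K H) MX) (hY : IsYDMA (GData.ofHopf K H) MY) :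
    Function.Bijective (braidMap MX.coact MY.act) := by
  have hcoB := copB_comp Sinv hS hS'
  have hcoA := copA_comp Sinv hS hS'
  have hcoass : ∀ x : X,
      (TensorProduct.assoc K H H X) ((rTensor X (Coalgebra.comul (R := K))) (MX.coact x))
        = (lTensor H MX.coact) (MX.coact x) := by
    intro x
    have := LinearMap.congr_fun hX.coassoc x
    simpa using this
  have left : ∀ z : X ⊗[K] Y,
      braidInvMap MX.coact MY.act Sinv (braidMap MX.coact MY.act z) = z := by
    intro z
    induction z using TensorProduct.induction_on with
    | zero => simp
    | tmul x y =>
      rw [braid_tmul, part5L1 MX MY Sinv y (MX.coact x), ← hcoass x,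
        part5L2 MX MY hY Sinv y (MX.coact x), hcoB, part5L3 MY hY y (MX.coact x)]
      have := hX.counit_coact x
      simp only [ofHopf_counit] at this
      rw [this]
    | add s t hs ht => simp only [map_add, hs, ht]
  have right : ∀ z : Y ⊗[K] X,
      braidMap MX.coact MY.act (braidInvMap MX.coact MY.act Sinv z) = z := by
    intro z
    induction z using TensorProduct.induction_on with
    | zero => simp
    | tmul y x =>
      rw [braidInv_tmul, part5R1 MX MY Sinv y (MX.coact x), ← hcoass x,
        part5R2 MX MY hY Sinv y (MX.coact x), hcoA, part5R3 MY hY y (MX.coact x)]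
      have := hX.counit_coact x
      simp only [ofHopf_counit] at this
      rw [this]
    | add s t hs ht => simp only [map_add, hs, ht]
  exact Function.bijective_iff_has_inverse.mpr
    ⟨braidInvMap MX.coact MY.act Sinv, left, right⟩

/-- `x ⊗ (q ⊗ v) ↦ q ⊗ (x ⊗ v)`. -/
def sigX : X ⊗[K] (Y ⊗[K] X) →ₗ[K] Y ⊗[K] (X ⊗[K] X) :=
  (TensorProduct.assoc K Y X X).toLinearMap ∘ₗ
  rTensor X (TensorProduct.comm K X Y).toLinearMap ∘ₗ
  (TensorProduct.assoc K X Y X).symm.toLinearMap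

/-- `h ⊗ (b ⊗ v) ↦ b ⊗ (((Sinv h ▷ y) u) ⊗ v)`. -/
def psi1 (MY : XData K H Y) (Sinv : H →ₗ[K] H) (y u : Y) :
    H ⊗[K] (H ⊗[K] X) →ₗ[K] H ⊗[K] (Y ⊗[K] X) :=
  (TensorProduct.assoc K H Y X).toLinearMap ∘ₗ
  rTensor X (lTensor H (MY.mul.flip u ∘ₗ MY.act.flip y ∘ₗ Sinv)) ∘ₗ
  rTensor X (TensorProduct.comm K H H).toLinearMap ∘ₗ
  (TensorProduct.assoc K H H X).symm.toLinearMap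

def NN (MX : XData K H X) (MY : XData K H Y) (Sinv : H →ₗ[K] H) (y u : Y) :
    (H ⊗[K] X) ⊗[K] (H ⊗[K] (H ⊗[K] X)) →ₗ[K] Y ⊗[K] X :=
  TensorProduct.map (TensorProduct.lift MY.act ∘ₗ rTensor Y (LinearMap.mul' K H)) MX.mulU ∘ₗ
  (TensorProduct.assoc K (H ⊗[K] H) Y (X ⊗[K] X)).symm.toLinearMap ∘ₗ
  lTensor (H ⊗[K] H) (sigX (X := X) (Y := Y)) ∘ₗ
  (TensorProduct.tensorTensorTensorComm K H X H (Y ⊗[K] X)).toLinearMap ∘ₗ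
  lTensor (H ⊗[K] X) (psi1 (X := X) MY Sinv y u)

def betaY (MY : XData K H Y) (y u : Y) : (H ⊗[K] H) ⊗[K] H →ₗ[K] Y :=
  MY.mulU ∘ₗ TensorProduct.map (MY.act.flip y) (MY.act.flip u ∘ₗ LinearMap.mul' K H) ∘ₗ
    (TensorProduct.assoc K H H H).toLinearMap

def betaY' (MY : XData K H Y) (y u : Y) : (H ⊗[K] H) ⊗[K] H →ₗ[K] Y :=
  MY.mulU ∘ₗ
    TensorProduct.map (MY.act.flip y) (TensorProduct.lift MY.act ∘ₗ lTensor H (MY.act.flip u)) ∘ₗ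
    (TensorProduct.assoc K H H H).toLinearMap

def M4 (MX : XData K H X) (MY : XData K H Y) (y u : Y) :
    (H ⊗[K] X) ⊗[K] (H ⊗[K] X) →ₗ[K] Y ⊗[K] X :=
  TensorProduct.map (betaY MY y u) MX.mulU ∘ₗ
  (TensorProduct.tensorTensorTensorComm K (H ⊗[K] H) X H X).toLinearMap ∘ₗ
  rTensor (H ⊗[K] X) (rTensor X (Coalgebra.comul (R := K)))

def Rm (MX : XData K H X) (MY : XData K H Y) (y u : Y) :
    (H ⊗[K] (H ⊗[K] X)) ⊗[K] (H ⊗[K] X) →ₗ[K] Y ⊗[K] X :=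
  TensorProduct.map (betaY' MY y u) MX.mulU ∘ₗ
  (TensorProduct.tensorTensorTensorComm K (H ⊗[K] H) X H X).toLinearMap ∘ₗ
  rTensor (H ⊗[K] X) ((TensorProduct.assoc K H H X).symm.toLinearMap)

def P1m (MX : XData K H X) (MY : XData K H Y) (Sinv : H →ₗ[K] H)
    (a : H) (x0 v' : X) (y u : Y) : H ⊗[K] H →ₗ[K] Y ⊗[K] X :=
  (TensorProduct.mk K Y X).flip (MX.mul x0 v') ∘ₗ TensorProduct.lift MY.act ∘ₗ
  TensorProduct.map (LinearMap.mul K H a) (MY.mul.flip u ∘ₗ MY.act.flip y ∘ₗ Sinv) ∘ₗ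
  (TensorProduct.comm K H H).toLinearMap

def Qm (MX : XData K H X) (MY : XData K H Y) (Sinv : H →ₗ[K] H)
    (a : H) (x0 v' : X) (y u : Y) : H ⊗[K] (H ⊗[K] H) →ₗ[K] Y ⊗[K] X :=
  (TensorProduct.mk K Y X).flip (MX.mul x0 v') ∘ₗ MY.mulU ∘ₗ
  TensorProduct.lift (MY.actT.compl₂
    (((TensorProduct.mk K Y Y).flip u) ∘ₗ MY.act.flip y ∘ₗ Sinv)) ∘ₗ
  (TensorProduct.comm K H (H ⊗[K] H)).toLinearMap ∘ₗ
  lTensor H (mulT K H ∘ₗ (TensorProduct.mk K (H ⊗[K] H) (H ⊗[K] H)) (Coalgebra.comul a))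

def P3m (MX : XData K H X) (MY : XData K H Y)
    (a : H) (x0 v' : X) (y u : Y) : H ⊗[K] H →ₗ[K] Y ⊗[K] X :=
  (TensorProduct.mk K Y X).flip (MX.mul x0 v') ∘ₗ MY.mulU ∘ₗ
  (MY.actT (Coalgebra.comul a)) ∘ₗ
  TensorProduct.map (MY.act.flip y) (MY.act.flip u)

theorem part1b1 (MX : XData K H X) (MY : XData K H Y) (Sinv : H →ₗ[K] H)
    (a : H) (x0 v' : X) (y u : Y) (T : H ⊗[K] H) :
    NN MX MY Sinv y u
        ((a ⊗ₜ[K] x0) ⊗ₜ[K] (TensorProduct.assoc K H H X) (T ⊗ₜ[K] v'))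
      = P1m MX MY Sinv a x0 v' y u T := by
  induction T using TensorProduct.induction_on with
  | zero => simp [NN, P1m]
  | tmul h1 h2 => simp [NN, P1m, psi1, sigX, XData.mulU]
  | add s t hs ht => simp only [map_add, add_tmul, tmul_add, hs, ht]

theorem part1b2 (MX : XData K H X) (MY : XData K H Y)
    (hY : IsYDMA (GData.ofHopf K H) MY) (Sinv : H →ₗ[K] H)
    (a : H) (x0 v' : X) (y u : Y) (T : H ⊗[K] H) :
    P1m MX MY Sinv a x0 v' y u T
      = Qm MX MY Sinv a x0 v' y u ((lTensor H (Coalgebra.comul (R := K))) T) := by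
  induction T using TensorProduct.induction_on with
  | zero => simp
  | tmul h1 h2 =>
    simp only [P1m, Qm, coe_comp, Function.comp_apply, LinearEquiv.coe_coe, comm_tmul,
      TensorProduct.map_tmul, TensorProduct.lift.tmul, flip_apply, TensorProduct.mk_apply,
      lTensor_tmul, LinearMap.mul_apply']
    rw [compl₂_apply]
    simp only [coe_comp, Function.comp_apply, flip_apply, TensorProduct.mk_apply]
    have hd := LinearMap.congr_fun (hY.act_mul_distrib (a * h2))
      (MY.act (Sinv h1) y ⊗ₜ[K] u)
    simp only [coe_comp, Function.comp_apply, XData.mulU, TensorProduct.lift.tmul,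
      ofHopf_comul] at hd
    rw [hd, comul_mul'']
    rfl
  | add s t hs ht => simp only [map_add, tmul_add, hs, ht]

theorem part1b4 (MX : XData K H X) (MY : XData K H Y)
    (hY : IsYDMA (GData.ofHopf K H) MY) (Sinv : H →ₗ[K] H)
    (a : H) (x0 v' : X) (y u : Y) (U : (H ⊗[K] H) ⊗[K] H) :
    Qm MX MY Sinv a x0 v' y u ((TensorProduct.assoc K H H H) U)
      = P3m MX MY a x0 v' y u ((rTensor H (copA_map Sinv)) U) := by
  induction U using TensorProduct.induction_on with
  | zero => simp
  | tmul p h3 =>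
    induction p using TensorProduct.induction_on with
    | zero => simp
    | tmul h1 h2 =>
      simp only [Qm, P3m, coe_comp, Function.comp_apply, LinearEquiv.coe_coe, assoc_tmul,
        lTensor_tmul, rTensor_tmul, TensorProduct.mk_apply, copA_map_tmul,
        TensorProduct.map_tmul, flip_apply]
      generalize (Coalgebra.comul (R := K) a) = ta
      induction ta using TensorProduct.induction_on with
      | zero => simp [mulT]
      | tmul a1 a2 =>
        rw [mulT_tmul, Algebra.TensorProduct.tmul_mul_tmul, comm_tmul,
          TensorProduct.lift.tmul, compl₂_apply]
        simp only [coe_comp, Function.comp_apply, flip_apply, TensorProduct.mk_apply,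
          XData.actT, TensorProduct.lift.tmul, compl₂_apply,
          TensorProduct.mapBilinear_apply, TensorProduct.map_tmul]
        have e1 := LinearMap.congr_fun (hY.act_mul a1 h2) (MY.act (Sinv h1) y)
        have e2 := LinearMap.congr_fun (hY.act_mul h2 (Sinv h1)) y
        have e3 := LinearMap.congr_fun (hY.act_mul a2 h3) u
        simp only [ofHopf_mul, coe_comp, Function.comp_apply, LinearMap.mul_apply'] at e1 e2 e3
        rw [e1, ← e2, e3]
      | add s t hs ht =>
        simp only [map_add, mulT, coe_comp, Function.comp_apply, add_tmul, map_add,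
          LinearEquiv.coe_coe, LinearMap.add_apply, tmul_add] at hs ht ⊢
        rw [hs, ht]
    | add s t hs ht => simp only [map_add, add_tmul, hs, ht]
  | add s t hs ht => simp only [map_add, hs, ht]

theorem part1b6 (MX : XData K H X) (MY : XData K H Y)
    (hY : IsYDMA (GData.ofHopf K H) MY)
    (a h : H) (x0 v' : X) (y u : Y) :
    M4 MX MY y u ((a ⊗ₜ[K] x0) ⊗ₜ[K] (h ⊗ₜ[K] v'))
      = P3m MX MY a x0 v' y u ((1 : H) ⊗ₜ[K] h) := by
  have h1y : MY.act (1 : H) y = y := by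
    rw [show (1 : H) = (GData.ofHopf K H).one from rfl, hY.act_one]; rfl
  simp only [M4, P3m, betaY, coe_comp, Function.comp_apply, LinearEquiv.coe_coe,
    rTensor_tmul, tensorTensorTensorComm_tmul, TensorProduct.map_tmul, flip_apply,
    TensorProduct.mk_apply]
  generalize (Coalgebra.comul (R := K) a) = ta
  induction ta using TensorProduct.induction_on with
  | zero => simp [XData.actT]
  | tmul a1 a2 =>
    simp only [assoc_tmul, TensorProduct.map_tmul, flip_apply, coe_comp,
      Function.comp_apply, mul'_apply, XData.actT, TensorProduct.lift.tmul, compl₂_apply,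
      TensorProduct.mapBilinear_apply, h1y]
    have e := LinearMap.congr_fun (hY.act_mul a2 h) u
    simp only [ofHopf_mul, coe_comp, Function.comp_apply, LinearMap.mul_apply'] at e
    rw [e]
    simp [XData.mulU]
  | add s t hs ht =>
    simp only [map_add, add_tmul, LinearMap.add_apply, tmul_add] at hs ht ⊢
    rw [hs, ht]

theorem part1b_all (MX : XData K H X) (MY : XData K H Y)
    (hY : IsYDMA (GData.ofHopf K H) MY) (Sinv : H →ₗ[K] H)
    (hS : Sinv ∘ₗ HopfAlgebra.antipode (R := K) = LinearMap.id)
    (hS' : HopfAlgebra.antipode (R := K) ∘ₗ Sinv = LinearMap.id)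
    (y u : Y) (s t : H ⊗[K] X) :
    NN MX MY Sinv y u
        (s ⊗ₜ[K] (TensorProduct.assoc K H H X) ((rTensor X (Coalgebra.comul (R := K))) t))
      = M4 MX MY y u (s ⊗ₜ[K] t) := by
  induction s using TensorProduct.induction_on with
  | zero => simp
  | tmul a x0 =>
    induction t using TensorProduct.induction_on with
    | zero => simp
    | tmul h v' =>
      rw [rTensor_tmul, part1b1 MX MY Sinv a x0 v' y u,
        part1b2 MX MY hY Sinv a x0 v' y u, part1b6 MX MY hY a h x0 v' y u,
        ← copA2 Sinv hS hS' h, ← part1b4 MX MY hY Sinv a x0 v' y u]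
      congr 1
      have := Coalgebra.coassoc_apply (R := K) h
      exact this.symm
    | add s t hs ht => simp only [map_add, tmul_add, hs, ht]
  | add s t hs ht => simp only [map_add, add_tmul, hs, ht]

theorem part1a (MX : XData K H X) (MY : XData K H Y)
    (hX : IsYDMA (GData.ofHopf K H) MX) (Sinv : H →ₗ[K] H)
    (x : X) (y u : Y) (t : H ⊗[K] X) :
    braidMap MX.coact MY.act
        ((rTensor Y (MX.mul x))
          ((lTensor X (MY.mul.flip u))
            ((lTensor X (MY.act.flip y ∘ₗ Sinv)) ((TensorProduct.comm K H X) t))))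
      = NN MX MY Sinv y u (MX.coact x ⊗ₜ[K] (lTensor H MX.coact) t) := by
  induction t using TensorProduct.induction_on with
  | zero => simp
  | tmul h v' =>
    simp only [comm_tmul, lTensor_tmul, rTensor_tmul, coe_comp, Function.comp_apply,
      flip_apply]
    rw [braid_tmul]
    have hcm := LinearMap.congr_fun hX.coact_mul (x ⊗ₜ[K] v')
    simp only [coe_comp, Function.comp_apply, XData.mulU, TensorProduct.lift.tmul,
      TensorProduct.map_tmul] at hcm
    rw [hcm, mulAX]
    simp only [coe_comp, Function.comp_apply, LinearEquiv.coe_coe, ofHopf_mul, lift_mul_eq]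
    generalize MX.coact x = s
    generalize MX.coact v' = r
    induction s using TensorProduct.induction_on with
    | zero => simp
    | tmul a x0 =>
      induction r using TensorProduct.induction_on with
      | zero => simp [NN, psi1]
      | tmul b v0 => simp [NN, psi1, sigX, XData.mulU]
      | add s t hs ht => simp only [map_add, tmul_add, hs, ht]
    | add s t hs ht => simp only [map_add, add_tmul, hs, ht]
  | add s t hs ht => simp only [map_add, tmul_add, hs, ht]

theorem part1c (MX : XData K H X) (MY : XData K H Y) (y u : Y) (s t : H ⊗[K] X) :
    (bp (GData.ofHopf K H) MY MX).mul
        ((rTensor X (MY.act.flip y)) s) ((rTensor X (MY.act.flip u)) t)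
      = Rm MX MY y u ((lTensor H MX.coact) s ⊗ₜ[K] t) := by
  induction s using TensorProduct.induction_on with
  | zero => simp
  | tmul a x' =>
    induction t using TensorProduct.induction_on with
    | zero => simp
    | tmul h v0 =>
      simp only [rTensor_tmul, lTensor_tmul, flip_apply]
      rw [bp_mul_tmul_s10, braid_tmul]
      generalize MX.coact x' = r
      induction r using TensorProduct.induction_on with
      | zero => simp [Rm]
      | tmul b x0 => simp [Rm, betaY', XData.mulU]
      | add s t hs ht => simp only [map_add, add_tmul, tmul_add, hs, ht]
    | add s t hs ht =>
      simp only [map_add, tmul_add, hs, ht]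
  | add s t hs ht => simp only [map_add, add_tmul, LinearMap.add_apply, hs, ht]

theorem part1d (MX : XData K H X) (MY : XData K H Y)
    (hY : IsYDMA (GData.ofHopf K H) MY) (y u : Y) (s t : H ⊗[K] X) :
    Rm MX MY y u
        ((TensorProduct.assoc K H H X) ((rTensor X (Coalgebra.comul (R := K))) s) ⊗ₜ[K] t)
      = M4 MX MY y u (s ⊗ₜ[K] t) := by
  induction s using TensorProduct.induction_on with
  | zero => simp
  | tmul a x' =>
    induction t using TensorProduct.induction_on with
    | zero => simp
    | tmul h v0 =>
      simp only [rTensor_tmul, Rm, M4, coe_comp, Function.comp_apply, LinearEquiv.coe_coe]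
      generalize (Coalgebra.comul (R := K) a) = ta
      induction ta using TensorProduct.induction_on with
      | zero => simp
      | tmul a1 a2 =>
        simp only [assoc_tmul, assoc_symm_tmul, rTensor_tmul, tensorTensorTensorComm_tmul,
          TensorProduct.map_tmul, betaY, betaY', coe_comp, Function.comp_apply,
          LinearEquiv.coe_coe, flip_apply, mul'_apply, lTensor_tmul,
          TensorProduct.lift.tmul]
        have e := LinearMap.congr_fun (hY.act_mul a2 h) u
        simp only [ofHopf_mul, coe_comp, Function.comp_apply, LinearMap.mul_apply'] at e
        rw [e]
      | add s t hs ht =>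
        simp only [map_add, add_tmul, LinearMap.add_apply] at hs ht ⊢
        rw [hs, ht]
    | add s t hs ht => simp only [map_add, tmul_add, hs, ht]
  | add s t hs ht => simp only [map_add, add_tmul, hs, ht]

theorem part1 (Sinv : H →ₗ[K] H)
    (hS : Sinv ∘ₗ HopfAlgebra.antipode (R := K) = LinearMap.id)
    (hS' : HopfAlgebra.antipode (R := K) ∘ₗ Sinv = LinearMap.id)
    (MX : XData K H X) (MY : XData K H Y)
    (hX : IsYDMA (GData.ofHopf K H) MX) (hY : IsYDMA (GData.ofHopf K H) MY)
    (hsym : BraidedSymm MX MY Sinv) :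
    ∀ s t : X ⊗[K] Y,
      braidMap MX.coact MY.act ((bp (GData.ofHopf K H) MX MY).mul s t)
        = (bp (GData.ofHopf K H) MY MX).mul
            (braidMap MX.coact MY.act s) (braidMap MX.coact MY.act t) := by
  have hcoass : ∀ w : X,
      (TensorProduct.assoc K H H X) ((rTensor X (Coalgebra.comul (R := K))) (MX.coact w))
        = (lTensor H MX.coact) (MX.coact w) := by
    intro w
    have := LinearMap.congr_fun hX.coassoc w
    simpa using this
  intro s t
  induction s using TensorProduct.induction_on with
  | zero => simp
  | tmul x y =>
    induction t using TensorProduct.induction_on with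
    | zero => simp
    | tmul v u =>
      rw [bp_mul_tmul_s10, hsym y v, braidInv_tmul, part1a MX MY hX Sinv x y u (MX.coact v),
        ← hcoass v, part1b_all MX MY hY Sinv hS hS' y u (MX.coact x) (MX.coact v),
        ← part1d MX MY hY y u (MX.coact x) (MX.coact v), hcoass x,
        ← part1c MX MY y u (MX.coact x) (MX.coact v), ← braid_tmul, ← braid_tmul]
    | add s t hs ht => simp only [map_add, hs, ht]
  | add s t hs ht => simp only [map_add, LinearMap.add_apply, hs, ht]

end MainHelpers

variable {K : Type u} [Field K]
variable {H : Type v} [Ring H] [HopfAlgebra K H]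
variable {X : Type w} [AddCommGroup X] [Module K X]
variable {Y : Type*} [AddCommGroup Y] [Module K Y]

/-- For braided symmetric Yetter–Drinfeld `H`-module algebras `X`, `Y`,
the map `φ : X ⋈ Y → Y ⋈ X`, `φ(x ⋈ y) = (x₍₋₁₎ ▷ y) ⋈ x₍₀₎`, is an isomorphism of
Yetter–Drinfeld `H`-module algebras: an algebra map, an `H`-module map, a comodule map,
and bijective. -/
theorem braided_product_flip_iso
    (Sinv : H →ₗ[K] H)
    (hS : Sinv ∘ₗ HopfAlgebra.antipode (R := K) = LinearMap.id)
    (hS' : HopfAlgebra.antipode (R := K) ∘ₗ Sinv = LinearMap.id)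
    (MX : XData K H X) (MY : XData K H Y)
    (hX : IsYDMA (GData.ofHopf K H) MX) (hY : IsYDMA (GData.ofHopf K H) MY)
    (hsym : BraidedSymm MX MY Sinv) :
    -- φ := braiding c_{X,Y} : x ⊗ y ↦ (x₍₋₁₎ ▷ y) ⊗ x₍₀₎
    (∀ s t : X ⊗[K] Y,
        braidMap MX.coact MY.act ((bp (GData.ofHopf K H) MX MY).mul s t)
          = (bp (GData.ofHopf K H) MY MX).mul
              (braidMap MX.coact MY.act s) (braidMap MX.coact MY.act t))
    ∧ braidMap MX.coact MY.act ((bp (GData.ofHopf K H) MX MY).one)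
        = (bp (GData.ofHopf K H) MY MX).one
    ∧ (∀ h : H,
        (braidMap MX.coact MY.act) ∘ₗ ((bp (GData.ofHopf K H) MX MY).act h)
          = ((bp (GData.ofHopf K H) MY MX).act h) ∘ₗ (braidMap MX.coact MY.act))
    ∧ ((bp (GData.ofHopf K H) MY MX).coact ∘ₗ (braidMap MX.coact MY.act)
        = (lTensor H (braidMap MX.coact MY.act)) ∘ₗ (bp (GData.ofHopf K H) MX MY).coact)
    ∧ Function.Bijective (braidMap MX.coact MY.act) :=
  ⟨part1 Sinv hS hS' MX MY hX hY hsym, part2 MX MY hX hY,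
    fun h => part3 MX MY hX hY h, part4 MX MY hX hY, part5 Sinv hS hS' MX MY hX hY⟩


end
end
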